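/- arXiv:1610.08816 — 2 statements merged into one kernel-verified Lean document; each statement's English description precedes it below -/
import Mathlib

section
/- For a connected threshold graph Γ with string 0^{s₁}1^{t₁}⋯0^{s_k}1^{t_k}, the spectrum of the normalized adjacency matrix 𝒜 equals the union (as multisets, taking simple eigenvalues from ℬ_π) of the spectrum of the normalized quotient matrix ℬ_π and the set T, where T consists of the eigenvalue 0 with multiplicity s − k together with eigenvalues −1/(t + Sᵢ − 1) with multiplicity tᵢ − 1 for each i with tᵢ > 1. -/
open Matrix Polynomial BigOperators Finset

def thresholdGraph (n : ℕ) (b : Fin n → Bool) : SimpleGraph (Fin n) where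
  Adj i j := i ≠ j ∧ b (max i j) = true
  symm := ⟨fun i j h => ⟨h.1.symm, by rw [max_comm]; exact h.2⟩⟩
  loopless := ⟨fun i h => h.1 rfl⟩

instance (n : ℕ) (b : Fin n → Bool) : DecidableRel (thresholdGraph n b).Adj :=
  fun i j => inferInstanceAs (Decidable (i ≠ j ∧ b (max i j) = true))

noncomputable def NA {n : ℕ} (G : SimpleGraph (Fin n)) [DecidableRel G.Adj] :
    Matrix (Fin n) (Fin n) ℝ :=
  (Matrix.diagonal fun i => ((G.degree i : ℝ))⁻¹) * G.adjMatrix ℝ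

def cum (s t : ℕ → ℕ) (i : ℕ) : ℕ := ∑ j ∈ Finset.range i, (s j + t j)

def isOne (k : ℕ) (s t : ℕ → ℕ) (p : ℕ) : Bool :=
  decide (∃ i < k, cum s t i + s i ≤ p ∧ p < cum s t i + s i + t i)

def TG (k : ℕ) (s t : ℕ → ℕ) : SimpleGraph (Fin (cum s t k)) :=
  thresholdGraph _ (fun p => isOne k s t p.val)

instance (k : ℕ) (s t : ℕ → ℕ) : DecidableRel (TG k s t).Adj :=
  inferInstanceAs (DecidableRel (thresholdGraph _ _).Adj)

/-- The quotient matrix `B_π` of the natural equitable partition of the threshold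
graph `0^{s₁}1^{t₁}⋯0^{s_k}1^{t_k}` into `2k` cells. Cells are 0-indexed:
cell `2i` is the `sᵢ` isolated-type vertices of stage `i`, cell `2i+1` the `tᵢ`
dominating-type vertices of stage `i`. -/
def Bq (k : ℕ) (s t : ℕ → ℕ) : Matrix (Fin (2 * k)) (Fin (2 * k)) ℝ :=
  fun i j =>
    if i.val % 2 = 0 then
      (if j.val % 2 = 1 ∧ i.val / 2 ≤ j.val / 2 then (t (j.val / 2) : ℝ) else 0)
    else
      if j < i then (if j.val % 2 = 0 then (s (j.val / 2) : ℝ) else (t (j.val / 2) : ℝ))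
      else if j = i then (t (i.val / 2) : ℝ) - 1
      else if j.val % 2 = 1 then (t (j.val / 2) : ℝ) else 0

/-- The common degree `d(Cᵢ)` of the vertices in cell `i`, i.e. the `i`-th row sum
of `B_π`. -/
noncomputable def dq (k : ℕ) (s t : ℕ → ℕ) (i : Fin (2 * k)) : ℝ := ∑ j, Bq k s t i j

/-- The normalized quotient matrix `ℬ_π = D_π⁻¹ B_π`. -/
noncomputable def Bcal (k : ℕ) (s t : ℕ → ℕ) : Matrix (Fin (2 * k)) (Fin (2 * k)) ℝ :=
  Matrix.diagonal (fun i => (dq k s t i)⁻¹) * Bq k s t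

section Cells
variable (k : ℕ) (s t : ℕ → ℕ)

/-- start of cell `i` (cells indexed `0..2k-1`). -/
def st (i : ℕ) : ℕ := cum s t (i / 2) + (if i % 2 = 1 then s (i / 2) else 0)

/-- size of cell `i`. -/
def sz (i : ℕ) : ℕ := if i % 2 = 0 then s (i / 2) else t (i / 2)

lemma st_succ (i : ℕ) : st s t (i + 1) = st s t i + sz s t i := by
  rcases Nat.even_or_odd i with ⟨a, ha⟩ | ⟨a, ha⟩
  · subst ha
    have h1 : (a + a) / 2 = a := by omega
    have h2 : (a + a) % 2 = 0 := by omega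
    have h3 : (a + a + 1) / 2 = a := by omega
    have h4 : (a + a + 1) % 2 = 1 := by omega
    simp [st, sz, h1, h2, h3, h4]
  · subst ha
    have h1 : (2 * a + 1) / 2 = a := by omega
    have h2 : (2 * a + 1) % 2 = 1 := by omega
    have h3 : (2 * a + 1 + 1) / 2 = a + 1 := by omega
    have h4 : (2 * a + 1 + 1) % 2 = 0 := by omega
    simp only [st, sz, h1, h2, h3, h4]
    simp [cum, Finset.sum_range_succ]
    ring
lemma st_zero : st s t 0 = 0 := by simp [st, cum]

lemma st_mono : Monotone (st s t) :=
  monotone_nat_of_le_succ (fun i => by rw [st_succ]; omega)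

lemma st_last : st s t (2 * k) = cum s t k := by
  have h1 : (2 * k) / 2 = k := by omega
  have h2 : (2 * k) % 2 = 0 := by omega
  simp [st, h1, h2]

lemma sz_pos (hs : ∀ i < k, 1 ≤ s i) (ht : ∀ i < k, 1 ≤ t i) {i : ℕ} (hi : i < 2 * k) : 1 ≤ sz s t i := by
  have : i / 2 < k := by omega
  unfold sz
  split
  · exact hs _ this
  · exact ht _ this

lemma st_strict (hs : ∀ i < k, 1 ≤ s i) (ht : ∀ i < k, 1 ≤ t i) {i j : ℕ} (hij : i < j) (hi : i < 2 * k) : st s t i < st s t j := by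
  have h1 : st s t i < st s t (i + 1) := by
    rw [st_succ]; have := sz_pos k s t hs ht hi; omega
  exact lt_of_lt_of_le h1 (st_mono s t hij)

/-- the cell of a vertex `p`: the number of cells entirely below `p`. -/
def cellN (p : ℕ) : ℕ := ((Finset.range (2 * k)).filter fun i => st s t (i + 1) ≤ p).card

lemma cell_exists {p : ℕ} (hp : p < cum s t k) :
    ∃ c < 2 * k, st s t c ≤ p ∧ p < st s t (c + 1) := by
  have key : ∀ m, m ≤ 2 * k → p < st s t m → ∃ c < m, st s t c ≤ p ∧ p < st s t (c + 1) := by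
    intro m
    induction m with
    | zero => intro _ h; rw [st_zero] at h; omega
    | succ m ih =>
      intro hm h
      by_cases hsm : st s t m ≤ p
      · exact ⟨m, by omega, hsm, h⟩
      · obtain ⟨c, hc, h1, h2⟩ := ih (by omega) (by omega)
        exact ⟨c, by omega, h1, h2⟩
  have := key (2 * k) le_rfl (by rw [st_last]; exact hp)
  exact this

lemma cellN_eq {p c : ℕ} (hc : c < 2 * k) (h1 : st s t c ≤ p) (h2 : p < st s t (c + 1)) :
    cellN k s t p = c := by
  have hfilter : (Finset.range (2 * k)).filter (fun i => st s t (i + 1) ≤ p) =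
      Finset.range c := by
    ext i
    simp only [Finset.mem_filter, Finset.mem_range]
    constructor
    · rintro ⟨hi, hle⟩
      by_contra hci
      have : c + 1 ≤ i + 1 := by omega
      have := st_mono s t this
      omega
    · intro hic
      have : i + 1 ≤ c := by omega
      exact ⟨by omega, le_trans (st_mono s t this) h1⟩
  rw [cellN, hfilter, Finset.card_range]

lemma cellN_spec (hs : ∀ i < k, 1 ≤ s i) (ht : ∀ i < k, 1 ≤ t i) {p : ℕ} (hp : p < cum s t k) :
    cellN k s t p < 2 * k ∧ st s t (cellN k s t p) ≤ p ∧ p < st s t (cellN k s t p + 1) := by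
  obtain ⟨c, hc, h1, h2⟩ := cell_exists k s t hp
  rw [cellN_eq k s t hc h1 h2]
  exact ⟨hc, h1, h2⟩

lemma cellN_mono {p q : ℕ} (h : p ≤ q) : cellN k s t p ≤ cellN k s t q := by
  apply Finset.card_le_card
  intro i hi
  simp only [Finset.mem_filter] at hi ⊢
  exact ⟨hi.1, le_trans hi.2 h⟩

lemma cellN_st (hs : ∀ i < k, 1 ≤ s i) (ht : ∀ i < k, 1 ≤ t i) {c : ℕ} (hc : c < 2 * k) : cellN k s t (st s t c) = c := by
  apply cellN_eq k s t hc le_rfl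
  rw [st_succ]
  have := sz_pos k s t hs ht hc
  omega

lemma isOne_iff (hs : ∀ i < k, 1 ≤ s i) (ht : ∀ i < k, 1 ≤ t i) {p : ℕ} (hp : p < cum s t k) :
    isOne k s t p = true ↔ cellN k s t p % 2 = 1 := by
  have hspec := cellN_spec k s t hs ht hp
  rw [isOne, decide_eq_true_iff]
  constructor
  · rintro ⟨i, hik, hle, hlt⟩
    have h1 : st s t (2 * i + 1) ≤ p := by
      rw [st]
      have e1 : (2 * i + 1) / 2 = i := by omega
      have e2 : (2 * i + 1) % 2 = 1 := by omega
      rw [e1, e2]; simpa using hle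
    have h2 : p < st s t (2 * i + 1 + 1) := by
      rw [st]
      have e1 : (2 * i + 1 + 1) / 2 = i + 1 := by omega
      have e2 : (2 * i + 1 + 1) % 2 = 0 := by omega
      rw [e1, e2]
      simp only [if_neg (by omega : ¬(0 = 1)), add_zero]
      calc p < cum s t i + s i + t i := hlt
        _ ≤ cum s t (i+1) := by simp [cum, Finset.sum_range_succ]; omega
    rw [cellN_eq k s t (by omega) h1 h2]
    omega
  · intro hodd
    obtain ⟨hlt2k, hle, hlt⟩ := hspec
    set c := cellN k s t p with hc
    obtain ⟨a, ha⟩ : ∃ a, c = 2 * a + 1 := ⟨c / 2, by omega⟩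
    refine ⟨a, by omega, ?_, ?_⟩
    · have : st s t c = cum s t a + s a := by
        rw [st, ha]
        have e1 : (2 * a + 1) / 2 = a := by omega
        have e2 : (2 * a + 1) % 2 = 1 := by omega
        rw [e1, e2]; simp
      omega
    · have : st s t (c + 1) = cum s t (a + 1) := by
        rw [st, ha]
        have e1 : (2 * a + 1 + 1) / 2 = a + 1 := by omega
        have e2 : (2 * a + 1 + 1) % 2 = 0 := by omega
        rw [e1, e2]; simp
      have hcum : cum s t (a + 1) = cum s t a + s a + t a := by
        simp [cum, Finset.sum_range_succ]; ring
      omega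

end Cells

section Counting
variable (k : ℕ) (s t : ℕ → ℕ)

/-- `ℕ`-valued quotient-matrix entries. -/
def bqN (i c : ℕ) : ℕ :=
  if c < i then (if i % 2 = 1 then sz s t c else 0)
  else if c = i then (if i % 2 = 1 then sz s t i - 1 else 0)
  else if c % 2 = 1 then sz s t c else 0

lemma Bq_eq_bqN (ht : ∀ i < k, 1 ≤ t i) (i j : Fin (2 * k)) :
    Bq k s t i j = (bqN s t i.val j.val : ℝ) := by
  rcases i with ⟨i, hi⟩; rcases j with ⟨j, hj⟩
  simp only [Bq, bqN, sz, Fin.mk_lt_mk, Fin.mk.injEq]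
  split_ifs <;>
    first
      | rfl
      | (exfalso; omega)
      | (rw [Nat.cast_sub (ht _ (by omega))]; push_cast; try ring)
      | simp

lemma card_filter_ico {n a b : ℕ} (hb : b ≤ n) :
    ((Finset.univ : Finset (Fin n)).filter fun q => a ≤ q.val ∧ q.val < b).card = b - a := by
  rw [← Nat.card_Ico a b]
  refine Finset.card_bij' (fun q _ => q.val)
    (fun m hm => (⟨m, lt_of_lt_of_le (Finset.mem_Ico.mp hm).2 hb⟩ : Fin n)) ?_ ?_ ?_ ?_
  · intro q hq
    simp only [Finset.mem_filter] at hq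
    exact Finset.mem_Ico.mpr hq.2
  · intro m hm
    simp only [Finset.mem_filter, Finset.mem_univ, true_and]
    exact Finset.mem_Ico.mp hm
  · intro q hq; rfl
  · intro m hm; rfl

lemma cellset_eq (hs : ∀ i < k, 1 ≤ s i) (ht : ∀ i < k, 1 ≤ t i) {c : ℕ} (hc : c < 2 * k) :
    ((Finset.univ : Finset (Fin (cum s t k))).filter fun q => cellN k s t q.val = c) =
    ((Finset.univ : Finset (Fin (cum s t k))).filter
      fun q => st s t c ≤ q.val ∧ q.val < st s t (c + 1)) := by
  ext q
  simp only [Finset.mem_filter, Finset.mem_univ, true_and]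
  constructor
  · intro h
    have := cellN_spec k s t hs ht q.isLt
    rw [h] at this; exact ⟨this.2.1, this.2.2⟩
  · rintro ⟨h1, h2⟩; exact cellN_eq k s t hc h1 h2

lemma st_le_n {c : ℕ} (hc : c ≤ 2 * k) : st s t c ≤ cum s t k := by
  rw [← st_last k s t]; exact st_mono s t hc

lemma card_cellset (hs : ∀ i < k, 1 ≤ s i) (ht : ∀ i < k, 1 ≤ t i) {c : ℕ} (hc : c < 2 * k) :
    ((Finset.univ : Finset (Fin (cum s t k))).filter fun q => cellN k s t q.val = c).card
      = sz s t c := by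
  rw [cellset_eq k s t hs ht hc, card_filter_ico (st_le_n k s t (by omega)), st_succ]
  omega

lemma adj_iff (hs : ∀ i < k, 1 ≤ s i) (ht : ∀ i < k, 1 ≤ t i) (p q : Fin (cum s t k)) :
    (TG k s t).Adj p q ↔ p ≠ q ∧ cellN k s t (max p.val q.val) % 2 = 1 := by
  have hmax : (max p q).val = max p.val q.val := by
    rcases le_total p q with h | h
    · rw [max_eq_right h, max_eq_right (Fin.le_def.mp h)]
    · rw [max_eq_left h, max_eq_left (Fin.le_def.mp h)]
  have hlt : max p.val q.val < cum s t k := max_lt p.isLt q.isLt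
  rw [TG, thresholdGraph]
  simp only [ne_eq]
  rw [hmax, isOne_iff k s t hs ht hlt]

lemma count_nbrs (hs : ∀ i < k, 1 ≤ s i) (ht : ∀ i < k, 1 ≤ t i)
    (p : Fin (cum s t k)) {c : ℕ} (hc : c < 2 * k) :
    ((Finset.univ : Finset (Fin (cum s t k))).filter
      fun q => (TG k s t).Adj p q ∧ cellN k s t q.val = c).card
      = bqN s t (cellN k s t p.val) c := by
  obtain ⟨hilt, hile, hilt2⟩ := cellN_spec k s t hs ht p.isLt
  set i := cellN k s t p.val with hi
  rcases lt_trichotomy c i with hci | hci | hci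
  · -- q < p always; adjacency iff i odd
    have hq : ∀ q : Fin (cum s t k), cellN k s t q.val = c → q.val < p.val := by
      intro q hcq
      have h2 := (cellN_spec k s t hs ht q.isLt).2.2
      rw [hcq] at h2
      calc q.val < st s t (c+1) := h2
        _ ≤ st s t i := st_mono s t (by omega)
        _ ≤ p.val := hile
    by_cases hodd : i % 2 = 1
    · rw [bqN, if_pos hci, if_pos hodd, ← card_cellset k s t hs ht hc]
      congr 1
      ext q
      simp only [Finset.mem_filter, Finset.mem_univ, true_and, and_iff_right_iff_imp]
      intro hcq
      rw [adj_iff k s t hs ht]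
      have hlt := hq q hcq
      refine ⟨by intro h; rw [h] at hlt; omega, ?_⟩
      rw [max_eq_left (le_of_lt hlt)]
      exact hodd
    · rw [bqN, if_pos hci, if_neg hodd, Finset.card_eq_zero]
      ext q
      simp only [Finset.mem_filter, Finset.mem_univ, true_and, Finset.notMem_empty,
        iff_false, not_and]
      intro hadj hcq
      rw [adj_iff k s t hs ht] at hadj
      have hlt := hq q hcq
      rw [max_eq_left (le_of_lt hlt)] at hadj
      exact hodd hadj.2
  · -- same cell
    have hp_mem : cellN k s t p.val = c := by omega
    by_cases hodd : c % 2 = 1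
    · rw [bqN, if_neg (by omega), if_pos hci, if_pos (by omega), ← hci]
      have hset : ((Finset.univ : Finset (Fin (cum s t k))).filter
          fun q => (TG k s t).Adj p q ∧ cellN k s t q.val = c) =
          (((Finset.univ : Finset (Fin (cum s t k))).filter
            fun q => cellN k s t q.val = c).erase p) := by
        ext q
        simp only [Finset.mem_filter, Finset.mem_univ, true_and, Finset.mem_erase]
        constructor
        · rintro ⟨hadj, hcq⟩
          exact ⟨fun h => (TG k s t).loopless.irrefl p (h ▸ hadj), hcq⟩
        · rintro ⟨hne, hcq⟩
          refine ⟨?_, hcq⟩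
          rw [adj_iff k s t hs ht]
          refine ⟨fun h => hne h.symm, ?_⟩
          rcases max_cases p.val q.val with ⟨h, _⟩ | ⟨h, _⟩ <;> rw [h]
          · rw [hp_mem]; exact hodd
          · rw [hcq]; exact hodd
      rw [hset, Finset.card_erase_of_mem]
      · rw [card_cellset k s t hs ht hc]
      · simp only [Finset.mem_filter, Finset.mem_univ, true_and]; exact hp_mem
    · rw [bqN, if_neg (by omega), if_pos hci, if_neg (by omega), Finset.card_eq_zero]
      ext q
      simp only [Finset.mem_filter, Finset.mem_univ, true_and, Finset.notMem_empty,
        iff_false, not_and]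
      intro hadj hcq
      rw [adj_iff k s t hs ht] at hadj
      apply hodd
      rcases max_cases p.val q.val with ⟨h, _⟩ | ⟨h, _⟩ <;> rw [h] at hadj
      · exact hp_mem ▸ hadj.2
      · exact hcq ▸ hadj.2
  · -- q > p always; adjacency iff c odd
    have hq : ∀ q : Fin (cum s t k), cellN k s t q.val = c → p.val < q.val := by
      intro q hcq
      have h2 := (cellN_spec k s t hs ht q.isLt).2.1
      rw [hcq] at h2
      calc p.val < st s t (i+1) := hilt2
        _ ≤ st s t c := st_mono s t (by omega)
        _ ≤ q.val := h2
    by_cases hodd : c % 2 = 1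
    · rw [bqN, if_neg (by omega), if_neg (by omega), if_pos hodd,
        ← card_cellset k s t hs ht hc]
      congr 1
      ext q
      simp only [Finset.mem_filter, Finset.mem_univ, true_and, and_iff_right_iff_imp]
      intro hcq
      rw [adj_iff k s t hs ht]
      have hlt := hq q hcq
      refine ⟨by intro h; rw [h] at hlt; omega, ?_⟩
      rw [max_eq_right (le_of_lt hlt), hcq]
      exact hodd
    · rw [bqN, if_neg (by omega), if_neg (by omega), if_neg hodd, Finset.card_eq_zero]
      ext q
      simp only [Finset.mem_filter, Finset.mem_univ, true_and, Finset.notMem_empty,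
        iff_false, not_and]
      intro hadj hcq
      rw [adj_iff k s t hs ht] at hadj
      have hlt := hq q hcq
      rw [max_eq_right (le_of_lt hlt)] at hadj
      exact hodd (hcq ▸ hadj.2)

lemma degree_eq (hs : ∀ i < k, 1 ≤ s i) (ht : ∀ i < k, 1 ≤ t i) (p : Fin (cum s t k)) :
    (TG k s t).degree p = ∑ c ∈ Finset.range (2 * k), bqN s t (cellN k s t p.val) c := by
  rw [← SimpleGraph.card_neighborFinset_eq_degree]
  have hnb : (TG k s t).neighborFinset p =
      (Finset.univ.filter fun q => (TG k s t).Adj p q) := by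
    ext q; simp [SimpleGraph.mem_neighborFinset]
  rw [hnb]
  rw [Finset.card_eq_sum_card_fiberwise
    (f := fun q : Fin (cum s t k) => cellN k s t q.val) (t := Finset.range (2 * k))
    (fun q _ => Finset.mem_range.mpr (cellN_spec k s t hs ht q.isLt).1)]
  apply Finset.sum_congr rfl
  intro c hc
  rw [Finset.filter_filter]
  exact count_nbrs k s t hs ht p (Finset.mem_range.mp hc)

lemma dq_eq_bqN (ht : ∀ i < k, 1 ≤ t i) (i : Fin (2 * k)) :
    dq k s t i = ((∑ c ∈ Finset.range (2 * k), bqN s t i.val c : ℕ) : ℝ) := by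
  rw [dq, Nat.cast_sum, ← Fin.sum_univ_eq_sum_range (fun c => (bqN s t i.val c : ℝ)) (2 * k)]
  exact Finset.sum_congr rfl fun j _ => Bq_eq_bqN k s t ht i j

lemma rowsum_pos (hs : ∀ i < k, 1 ≤ s i) (ht : ∀ i < k, 1 ≤ t i) {i : ℕ} (hi : i < 2 * k) :
    1 ≤ ∑ c ∈ Finset.range (2 * k), bqN s t i c := by
  rcases Nat.even_or_odd i with ⟨a, ha⟩ | ⟨a, ha⟩
  · have hmem : i + 1 ∈ Finset.range (2 * k) := by
      simp only [Finset.mem_range]; omega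
    calc 1 ≤ bqN s t i (i + 1) := by
          rw [bqN, if_neg (by omega), if_neg (by omega), if_pos (by omega)]
          exact sz_pos k s t hs ht (by omega)
      _ ≤ _ := Finset.single_le_sum (fun c _ => Nat.zero_le _) hmem
  · have hmem : i - 1 ∈ Finset.range (2 * k) := by
      simp only [Finset.mem_range]; omega
    calc 1 ≤ bqN s t i (i - 1) := by
          rw [bqN, if_pos (by omega), if_pos (by omega)]
          exact sz_pos k s t hs ht (by omega)
      _ ≤ _ := Finset.single_le_sum (fun c _ => Nat.zero_le _) hmem

lemma degree_eq_dq (hs : ∀ i < k, 1 ≤ s i) (ht : ∀ i < k, 1 ≤ t i) (p : Fin (cum s t k)) :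
    ((TG k s t).degree p : ℝ) =
      dq k s t ⟨cellN k s t p.val, (cellN_spec k s t hs ht p.isLt).1⟩ := by
  rw [degree_eq k s t hs ht p, dq_eq_bqN k s t ht]

end Counting

section Basis
variable (k : ℕ) (s t : ℕ → ℕ)

noncomputable def Bcal' (k : ℕ) (s t : ℕ → ℕ) : Matrix (Fin (2 * k)) (Fin (2 * k)) ℝ :=
  Matrix.diagonal (fun i => (dq k s t i)⁻¹) * Bq k s t

/-- change of basis matrix: columns are cell indicators (at representative columns)
and twin differences. -/
noncomputable def Pm : Matrix (Fin (cum s t k)) (Fin (cum s t k)) ℝ :=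
  fun r q =>
    if q.val = st s t (cellN k s t q.val) then
      (if cellN k s t r.val = cellN k s t q.val then 1 else 0)
    else (if r = q then (1:ℝ) else 0) - (if r.val = st s t (cellN k s t q.val) then 1 else 0)

noncomputable def Qm : Matrix (Fin (cum s t k)) (Fin (cum s t k)) ℝ :=
  fun p r =>
    if p.val = st s t (cellN k s t p.val) then
      (if cellN k s t r.val = cellN k s t p.val then ((sz s t (cellN k s t p.val) : ℝ))⁻¹ else 0)
    else (if p = r then (1:ℝ) else 0) -
      (if cellN k s t r.val = cellN k s t p.val then ((sz s t (cellN k s t p.val) : ℝ))⁻¹ else 0)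

def dN (c : ℕ) : ℕ := ∑ c' ∈ Finset.range (2 * k), bqN s t c c'

noncomputable def lam (c : ℕ) : ℝ := if c % 2 = 1 then -((dN k s t c : ℝ))⁻¹ else 0

/-- non-representative vertices -/
abbrev NR := {q : Fin (cum s t k) // ¬ q.val = st s t (cellN k s t q.val)}

instance : Fintype (NR k s t) := by unfold NR; infer_instance
instance : DecidableEq (NR k s t) := by unfold NR; infer_instance
instance : LinearOrder (NR k s t) := by unfold NR; infer_instance

lemma st_lt_n (hs : ∀ i < k, 1 ≤ s i) (ht : ∀ i < k, 1 ≤ t i) {c : ℕ} (hc : c < 2 * k) :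
    st s t c < cum s t k :=
  lt_of_lt_of_le (st_strict k s t hs ht (Nat.lt_succ_self c) hc) (st_le_n k s t (by omega))

variable (hs : ∀ i < k, 1 ≤ s i) (ht : ∀ i < k, 1 ≤ t i)

noncomputable def cellEquiv : (Fin (2 * k) ⊕ NR k s t) ≃ Fin (cum s t k) where
  toFun := Sum.elim
    (fun c => (⟨st s t c.val, st_lt_n k s t hs ht c.isLt⟩ : Fin (cum s t k)))
    Subtype.val
  invFun := fun q =>
    if h : q.val = st s t (cellN k s t q.val) then
      Sum.inl ⟨cellN k s t q.val, (cellN_spec k s t hs ht q.isLt).1⟩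
    else Sum.inr ⟨q, h⟩
  left_inv := by
    rintro (c | q)
    · dsimp only [Sum.elim_inl]
      have hcell : cellN k s t (st s t c.val) = c.val := cellN_st k s t hs ht c.isLt
      rw [dif_pos (by rw [hcell])]
      congr 1
      exact Fin.ext hcell
    · dsimp only [Sum.elim_inr]
      rw [dif_neg q.2]
  right_inv := by
    intro q
    dsimp only
    split_ifs with h
    · exact Fin.ext h.symm
    · rfl

noncomputable def lamS : NR k s t → ℝ := fun q => lam k s t (cellN k s t q.val.val)

noncomputable def Mm : Matrix (Fin (cum s t k)) (Fin (cum s t k)) ℝ :=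
  (Matrix.fromBlocks (Bcal' k s t) 0 0 (Matrix.diagonal (lamS k s t))).submatrix
    (cellEquiv k s t hs ht).symm (cellEquiv k s t hs ht).symm

lemma cellEquiv_symm_rep {q : Fin (cum s t k)} (hq : q.val = st s t (cellN k s t q.val)) :
    (cellEquiv k s t hs ht).symm q =
      Sum.inl ⟨cellN k s t q.val, (cellN_spec k s t hs ht q.isLt).1⟩ := by
  rw [Equiv.symm_apply_eq]
  simp only [cellEquiv, Equiv.coe_fn_mk, Sum.elim_inl]
  exact Fin.ext hq

lemma cellEquiv_symm_nonrep {q : Fin (cum s t k)} (hq : ¬ q.val = st s t (cellN k s t q.val)) :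
    (cellEquiv k s t hs ht).symm q = Sum.inr ⟨q, hq⟩ := by
  rw [Equiv.symm_apply_eq]; rfl

lemma Mm_rep_rep {r q : Fin (cum s t k)} (hr : r.val = st s t (cellN k s t r.val))
    (hq : q.val = st s t (cellN k s t q.val)) :
    Mm k s t hs ht r q = Bcal' k s t ⟨cellN k s t r.val, (cellN_spec k s t hs ht r.isLt).1⟩
      ⟨cellN k s t q.val, (cellN_spec k s t hs ht q.isLt).1⟩ := by
  rw [Mm, Matrix.submatrix_apply, cellEquiv_symm_rep k s t hs ht hr,
    cellEquiv_symm_rep k s t hs ht hq]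
  rfl

lemma Mm_nonrep_col {r q : Fin (cum s t k)} (hq : ¬ q.val = st s t (cellN k s t q.val)) :
    Mm k s t hs ht r q = if r = q then lam k s t (cellN k s t q.val) else 0 := by
  rw [Mm, Matrix.submatrix_apply, cellEquiv_symm_nonrep k s t hs ht hq]
  by_cases hr : r.val = st s t (cellN k s t r.val)
  · rw [cellEquiv_symm_rep k s t hs ht hr]
    have hne : r ≠ q := by
      intro h; subst h; exact hq hr
    rw [if_neg hne]
    rfl
  · rw [cellEquiv_symm_nonrep k s t hs ht hr]
    show Matrix.diagonal (lamS k s t) ⟨r, hr⟩ ⟨q, hq⟩ = _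
    by_cases hrq : r = q
    · subst hrq
      rw [if_pos rfl, Matrix.diagonal_apply_eq]
      rfl
    · rw [if_neg hrq, Matrix.diagonal_apply_ne]
      exact fun h => hrq (congrArg Subtype.val h)

lemma Mm_rep_nonrep {r q : Fin (cum s t k)} (hr : r.val = st s t (cellN k s t r.val))
    (hq : ¬ q.val = st s t (cellN k s t q.val)) : Mm k s t hs ht r q = 0 := by
  rw [Mm_nonrep_col k s t hs ht hq, if_neg (by intro h; subst h; exact hq hr)]

lemma Mm_nonrep_rep {r q : Fin (cum s t k)} (hr : ¬ r.val = st s t (cellN k s t r.val))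
    (hq : q.val = st s t (cellN k s t q.val)) : Mm k s t hs ht r q = 0 := by
  rw [Mm, Matrix.submatrix_apply, cellEquiv_symm_nonrep k s t hs ht hr,
    cellEquiv_symm_rep k s t hs ht hq]
  rfl

end Basis

section Inverse
variable (k : ℕ) (s t : ℕ → ℕ)

lemma sum_cell_ind (hs : ∀ i < k, 1 ≤ s i) (ht : ∀ i < k, 1 ≤ t i) {c : ℕ} (hc : c < 2 * k) :
    ∑ r : Fin (cum s t k), (if cellN k s t r.val = c then (1:ℝ) else 0)
      = (sz s t c : ℝ) := by
  rw [Finset.sum_boole, card_cellset k s t hs ht hc]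

lemma sz_ne_zero (hs : ∀ i < k, 1 ≤ s i) (ht : ∀ i < k, 1 ≤ t i) {c : ℕ} (hc : c < 2 * k) :
    ((sz s t c : ℝ)) ≠ 0 := by
  have := sz_pos k s t hs ht hc
  positivity

lemma cell_lt (hs : ∀ i < k, 1 ≤ s i) (ht : ∀ i < k, 1 ≤ t i) (q : Fin (cum s t k)) :
    cellN k s t q.val < 2 * k :=
  (cellN_spec k s t hs ht q.isLt).1

lemma cell_rep (hs : ∀ i < k, 1 ≤ s i) (ht : ∀ i < k, 1 ≤ t i) (q : Fin (cum s t k)) :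
    cellN k s t (st s t (cellN k s t q.val)) = cellN k s t q.val :=
  cellN_st k s t hs ht (cell_lt k s t hs ht q)

lemma QP_eq (hs : ∀ i < k, 1 ≤ s i) (ht : ∀ i < k, 1 ≤ t i) :
    Qm k s t * Pm k s t = 1 := by
  ext p q
  rw [Matrix.mul_apply, Matrix.one_apply]
  by_cases hp : p.val = st s t (cellN k s t p.val) <;>
    by_cases hq : q.val = st s t (cellN k s t q.val)
  · -- both representatives
    by_cases hcc : cellN k s t p.val = cellN k s t q.val
    · have hpq : p = q := Fin.ext (by rw [hp, hcc, ← hq])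
      rw [if_pos hpq]
      have hstep : ∀ r : Fin (cum s t k), Qm k s t p r * Pm k s t r q =
          ((sz s t (cellN k s t p.val) : ℝ))⁻¹ *
            (if cellN k s t r.val = cellN k s t p.val then (1:ℝ) else 0) := by
        intro r
        rw [Qm, Pm, if_pos hp, if_pos hq, ← hcc]
        split_ifs <;> ring
      rw [Finset.sum_congr rfl (fun r _ => hstep r), ← Finset.mul_sum,
        sum_cell_ind k s t hs ht (cell_lt k s t hs ht p),
        inv_mul_cancel₀ (sz_ne_zero k s t hs ht (cell_lt k s t hs ht p))]
    · have hpq : p ≠ q := fun h => hcc (by rw [h])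
      rw [if_neg hpq]
      apply Finset.sum_eq_zero
      intro r _
      rw [Qm, Pm, if_pos hp, if_pos hq]
      split_ifs with h1 h2 <;> first | ring1 | (exfalso; apply hcc; rw [← h1, h2])
  · -- p rep, q not
    have hpq : p ≠ q := fun h => hq (by rw [← h]; exact hp)
    rw [if_neg hpq]
    set rq : Fin (cum s t k) :=
      ⟨st s t (cellN k s t q.val), st_lt_n k s t hs ht (cell_lt k s t hs ht q)⟩ with hrq
    have hstep : ∀ r : Fin (cum s t k), Qm k s t p r * Pm k s t r q =
        (if r = q then (if cellN k s t r.val = cellN k s t p.val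
            then ((sz s t (cellN k s t p.val) : ℝ))⁻¹ else 0) else 0) -
        (if r.val = st s t (cellN k s t q.val)
          then (if cellN k s t r.val = cellN k s t p.val
            then ((sz s t (cellN k s t p.val) : ℝ))⁻¹ else 0) else 0) := by
      intro r
      rw [Qm, Pm, if_pos hp, if_neg hq]
      split_ifs <;> ring
    have hconv : ∀ r : Fin (cum s t k),
        (if r.val = st s t (cellN k s t q.val)
          then (if cellN k s t r.val = cellN k s t p.val
            then ((sz s t (cellN k s t p.val) : ℝ))⁻¹ else 0) else 0) =
        (if r = rq then (if cellN k s t r.val = cellN k s t p.val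
            then ((sz s t (cellN k s t p.val) : ℝ))⁻¹ else 0) else 0) := by
      intro r
      by_cases hr : r = rq
      · rw [if_pos hr, if_pos (congrArg Fin.val hr)]
      · rw [if_neg hr, if_neg (fun h => hr (Fin.ext h))]
    rw [Finset.sum_congr rfl (fun r _ => hstep r)]
    rw [Finset.sum_congr rfl (fun r _ => by rw [hconv r]), Finset.sum_sub_distrib,
      Finset.sum_ite_eq', Finset.sum_ite_eq']
    simp only [Finset.mem_univ, if_true]
    have hclrq : cellN k s t rq.val = cellN k s t q.val := cell_rep k s t hs ht q
    rw [hclrq]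
    ring
  · -- p not rep, q rep
    have hpq : p ≠ q := fun h => hp (by rw [h]; exact hq)
    rw [if_neg hpq]
    have hstep : ∀ r : Fin (cum s t k), Qm k s t p r * Pm k s t r q =
        (if p = r then (if cellN k s t r.val = cellN k s t q.val then (1:ℝ) else 0) else 0) -
        ((if cellN k s t r.val = cellN k s t p.val
            then ((sz s t (cellN k s t p.val) : ℝ))⁻¹ else 0) *
          (if cellN k s t r.val = cellN k s t q.val then (1:ℝ) else 0)) := by
      intro r
      rw [Qm, Pm, if_neg hp, if_pos hq]
      split_ifs <;> ring
    rw [Finset.sum_congr rfl (fun r _ => hstep r), Finset.sum_sub_distrib,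
      Finset.sum_ite_eq]
    simp only [Finset.mem_univ, if_true]
    by_cases hcc : cellN k s t p.val = cellN k s t q.val
    · have hcv : ∀ r : Fin (cum s t k),
          ((if cellN k s t r.val = cellN k s t p.val
            then ((sz s t (cellN k s t p.val) : ℝ))⁻¹ else 0) *
          (if cellN k s t r.val = cellN k s t q.val then (1:ℝ) else 0)) =
          ((sz s t (cellN k s t p.val) : ℝ))⁻¹ *
            (if cellN k s t r.val = cellN k s t p.val then (1:ℝ) else 0) := by
        intro r
        rw [← hcc]
        split_ifs <;> ring
      rw [Finset.sum_congr rfl (fun r _ => hcv r), ← Finset.mul_sum,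
        sum_cell_ind k s t hs ht (cell_lt k s t hs ht p),
        inv_mul_cancel₀ (sz_ne_zero k s t hs ht (cell_lt k s t hs ht p)), if_pos hcc]
      ring
    · have hcv : ∀ r : Fin (cum s t k),
          ((if cellN k s t r.val = cellN k s t p.val
            then ((sz s t (cellN k s t p.val) : ℝ))⁻¹ else 0) *
          (if cellN k s t r.val = cellN k s t q.val then (1:ℝ) else 0)) = 0 := by
        intro r
        split_ifs with h1 h2 <;> first | ring1 | (exfalso; apply hcc; rw [← h1, h2])
      rw [Finset.sum_congr rfl (fun r _ => hcv r), Finset.sum_const_zero, if_neg hcc]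
      ring
  · -- both non rep
    set rq : Fin (cum s t k) :=
      ⟨st s t (cellN k s t q.val), st_lt_n k s t hs ht (cell_lt k s t hs ht q)⟩ with hrq
    have hclrq : cellN k s t rq.val = cellN k s t q.val := cell_rep k s t hs ht q
    have hstep : ∀ r : Fin (cum s t k), Qm k s t p r * Pm k s t r q =
        ((if p = r then (1:ℝ) else 0) * (if r = q then (1:ℝ) else 0)
          - (if p = r then (1:ℝ) else 0) * (if r.val = st s t (cellN k s t q.val) then (1:ℝ) else 0))
        - (((if cellN k s t r.val = cellN k s t p.val
              then ((sz s t (cellN k s t p.val) : ℝ))⁻¹ else 0) * (if r = q then (1:ℝ) else 0))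
          - ((if cellN k s t r.val = cellN k s t p.val
              then ((sz s t (cellN k s t p.val) : ℝ))⁻¹ else 0) *
              (if r.val = st s t (cellN k s t q.val) then (1:ℝ) else 0))) := by
      intro r
      rw [Qm, Pm, if_neg hp, if_neg hq]
      ring
    have hconv : ∀ (f : Fin (cum s t k) → ℝ) (r : Fin (cum s t k)),
        f r * (if r.val = st s t (cellN k s t q.val) then (1:ℝ) else 0) =
        (if r = rq then f r else 0) := by
      intro f r
      by_cases hr : r = rq
      · rw [if_pos hr, if_pos (congrArg Fin.val hr)]; ring
      · rw [if_neg hr, if_neg (fun h => hr (Fin.ext h))]; ring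
    have hstep2 : ∀ r : Fin (cum s t k), Qm k s t p r * Pm k s t r q =
        ((if r = q then (if p = r then (1:ℝ) else 0) else 0)
          - (if r = rq then (if p = r then (1:ℝ) else 0) else 0))
        - ((if r = q then (if cellN k s t r.val = cellN k s t p.val
              then ((sz s t (cellN k s t p.val) : ℝ))⁻¹ else 0) else 0)
          - (if r = rq then (if cellN k s t r.val = cellN k s t p.val
              then ((sz s t (cellN k s t p.val) : ℝ))⁻¹ else 0) else 0)) := by
      intro r
      rw [hstep r, ← hconv (fun r => (if p = r then (1:ℝ) else 0)) r,
        ← hconv (fun r => (if cellN k s t r.val = cellN k s t p.val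
            then ((sz s t (cellN k s t p.val) : ℝ))⁻¹ else 0)) r]
      have h1 : (if p = r then (1:ℝ) else 0) * (if r = q then (1:ℝ) else 0)
          = (if r = q then (if p = r then (1:ℝ) else 0) else 0) := by
        split_ifs <;> ring
      have h2 : (if cellN k s t r.val = cellN k s t p.val
            then ((sz s t (cellN k s t p.val) : ℝ))⁻¹ else 0) * (if r = q then (1:ℝ) else 0)
          = (if r = q then (if cellN k s t r.val = cellN k s t p.val
              then ((sz s t (cellN k s t p.val) : ℝ))⁻¹ else 0) else 0) := by
        split_ifs <;> ring
      rw [h1, h2]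
    rw [Finset.sum_congr rfl (fun r _ => hstep2 r)]
    simp only [Finset.sum_sub_distrib, Finset.sum_ite_eq', Finset.mem_univ, if_true]
    have hprq : (if p = rq then (1:ℝ) else 0) = 0 := by
      rw [if_neg]
      intro h
      apply hp
      have hv : p.val = st s t (cellN k s t q.val) := congrArg Fin.val h
      have hcl : cellN k s t p.val = cellN k s t q.val := by rw [h]; exact hclrq
      rw [hcl]; exact hv
    rw [hclrq, hprq]
    ring
end Inverse

section Intertwine
variable (k : ℕ) (s t : ℕ → ℕ)

lemma NA_apply (p r : Fin (cum s t k)) :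
    NA (TG k s t) p r =
      (((TG k s t).degree p : ℝ))⁻¹ * (if (TG k s t).Adj p r then 1 else 0) := by
  rw [NA, Matrix.diagonal_mul, SimpleGraph.adjMatrix_apply]

lemma cell_squeeze (hs : ∀ i < k, 1 ≤ s i) (ht : ∀ i < k, 1 ≤ t i) {p q : Fin (cum s t k)}
    (h1 : st s t (cellN k s t q.val) ≤ p.val) (h2 : p.val ≤ q.val) :
    cellN k s t p.val = cellN k s t q.val := by
  have ha : cellN k s t (st s t (cellN k s t q.val)) ≤ cellN k s t p.val :=
    cellN_mono k s t h1
  have hb : cellN k s t p.val ≤ cellN k s t q.val := cellN_mono k s t h2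
  have hc := cell_rep k s t hs ht q
  omega

variable (hs : ∀ i < k, 1 ≤ s i) (ht : ∀ i < k, 1 ≤ t i)

lemma adj_even {p q : Fin (cum s t k)} (heven : cellN k s t q.val % 2 = 0) :
    ((TG k s t).Adj p q ↔ (TG k s t).Adj p
      ⟨st s t (cellN k s t q.val), st_lt_n k s t hs ht (cell_lt k s t hs ht q)⟩) := by
  set rq : Fin (cum s t k) :=
    ⟨st s t (cellN k s t q.val), st_lt_n k s t hs ht (cell_lt k s t hs ht q)⟩ with hrqdef
  have hclrq : cellN k s t rq.val = cellN k s t q.val := cell_rep k s t hs ht q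
  have hrqval : rq.val = st s t (cellN k s t q.val) := rfl
  have hrqle : rq.val ≤ q.val := (cellN_spec k s t hs ht q.isLt).2.1
  rw [adj_iff k s t hs ht, adj_iff k s t hs ht]
  by_cases h1 : q.val < p.val
  · rw [max_eq_left (by omega : q.val ≤ p.val), max_eq_left (by omega : rq.val ≤ p.val)]
    constructor
    · rintro ⟨-, h⟩; exact ⟨Fin.ne_of_val_ne (by omega), h⟩
    · rintro ⟨-, h⟩; exact ⟨Fin.ne_of_val_ne (by omega), h⟩
  · by_cases h2 : p.val < st s t (cellN k s t q.val)
    · rw [max_eq_right (by omega : p.val ≤ q.val), max_eq_right (by omega : p.val ≤ rq.val),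
        hclrq]
      constructor
      · rintro ⟨-, h⟩; omega
      · rintro ⟨-, h⟩; omega
    · have hclp : cellN k s t p.val = cellN k s t q.val :=
        cell_squeeze k s t hs ht (by omega) (by omega)
      rw [max_eq_right (by omega : p.val ≤ q.val), max_eq_left (by omega : rq.val ≤ p.val)]
      constructor
      · rintro ⟨-, h⟩; omega
      · rintro ⟨-, h⟩; rw [hclp] at h; omega

lemma adj_odd {p q : Fin (cum s t k)} (hodd : cellN k s t q.val % 2 = 1)
    (hq : ¬ q.val = st s t (cellN k s t q.val)) :
    (if (TG k s t).Adj p q then (1:ℝ) else 0) -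
      (if (TG k s t).Adj p
        ⟨st s t (cellN k s t q.val), st_lt_n k s t hs ht (cell_lt k s t hs ht q)⟩
        then (1:ℝ) else 0) =
    (if p = ⟨st s t (cellN k s t q.val), st_lt_n k s t hs ht (cell_lt k s t hs ht q)⟩
      then (1:ℝ) else 0) - (if p = q then (1:ℝ) else 0) := by
  set rq : Fin (cum s t k) :=
    ⟨st s t (cellN k s t q.val), st_lt_n k s t hs ht (cell_lt k s t hs ht q)⟩ with hrqdef
  have hclrq : cellN k s t rq.val = cellN k s t q.val := cell_rep k s t hs ht q
  have hrqval : rq.val = st s t (cellN k s t q.val) := rfl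
  have hrqlt : rq.val < q.val := by
    have := (cellN_spec k s t hs ht q.isLt).2.1
    have : rq.val ≤ q.val := this
    have hne : rq.val ≠ q.val := fun h => hq h.symm
    omega
  by_cases hp1 : p = q
  · subst hp1
    rw [if_neg ((TG k s t).irrefl), if_pos, if_neg (fun h => hq (congrArg Fin.val h)),
      if_pos rfl]
    rw [adj_iff k s t hs ht]
    exact ⟨Fin.ne_of_val_ne (by omega), by rw [max_eq_left (by omega : rq.val ≤ p.val)]; exact hodd⟩
  · by_cases hp2 : p = rq
    · rw [hp2]
      have hadj : (TG k s t).Adj rq q := by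
        rw [adj_iff k s t hs ht]
        refine ⟨Fin.ne_of_val_ne (by omega), ?_⟩
        rw [max_eq_right (by omega : rq.val ≤ q.val)]
        exact hodd
      rw [if_pos hadj, if_neg ((TG k s t).irrefl), if_pos rfl,
        if_neg (fun h : rq = q => hq ((congrArg Fin.val h).symm.trans hrqval))]
    · have hiff : (TG k s t).Adj p q ↔ (TG k s t).Adj p rq := by
        rw [adj_iff k s t hs ht, adj_iff k s t hs ht]
        have hne1 : p.val ≠ q.val := fun h => hp1 (Fin.ext h)
        have hne2 : p.val ≠ rq.val := fun h => hp2 (Fin.ext h)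
        by_cases h1 : q.val < p.val
        · rw [max_eq_left (by omega : q.val ≤ p.val), max_eq_left (by omega : rq.val ≤ p.val)]
          constructor
          · rintro ⟨-, h⟩; exact ⟨Fin.ne_of_val_ne hne2, h⟩
          · rintro ⟨-, h⟩; exact ⟨Fin.ne_of_val_ne hne1, h⟩
        · by_cases h2 : p.val < rq.val
          · rw [max_eq_right (by omega : p.val ≤ q.val),
              max_eq_right (by omega : p.val ≤ rq.val), hclrq]
            constructor
            · rintro ⟨-, h⟩; exact ⟨Fin.ne_of_val_ne hne2, h⟩
            · rintro ⟨-, h⟩; exact ⟨Fin.ne_of_val_ne hne1, h⟩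
          · have hclp : cellN k s t p.val = cellN k s t q.val :=
              cell_squeeze k s t hs ht (by omega) (by omega)
            rw [max_eq_right (by omega : p.val ≤ q.val),
              max_eq_left (by omega : rq.val ≤ p.val), hclp]
            constructor
            · rintro ⟨-, h⟩; exact ⟨Fin.ne_of_val_ne hne2, h⟩
            · rintro ⟨-, h⟩; exact ⟨Fin.ne_of_val_ne hne1, h⟩
      rw [if_neg hp1, if_neg hp2]
      by_cases hadj : (TG k s t).Adj p q
      · rw [if_pos hadj, if_pos (hiff.mp hadj)]; try ring
      · rw [if_neg hadj, if_neg (fun h => hadj (hiff.mpr h))]; try ring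

lemma deg_cast (hs : ∀ i < k, 1 ≤ s i) (ht : ∀ i < k, 1 ≤ t i) (p : Fin (cum s t k)) :
    (((TG k s t).degree p : ℝ)) = ((dN k s t (cellN k s t p.val) : ℕ) : ℝ) := by
  rw [degree_eq k s t hs ht p]; rfl

lemma NAP_eq : NA (TG k s t) * Pm k s t = Pm k s t * Mm k s t hs ht := by
  ext p q
  rw [Matrix.mul_apply, Matrix.mul_apply]
  by_cases hq : q.val = st s t (cellN k s t q.val)
  · -- q is a representative column
    have hstep : ∀ r : Fin (cum s t k), NA (TG k s t) p r * Pm k s t r q =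
        (((TG k s t).degree p : ℝ))⁻¹ *
          (if (TG k s t).Adj p r ∧ cellN k s t r.val = cellN k s t q.val
            then (1:ℝ) else 0) := by
      intro r
      rw [NA_apply, Pm, if_pos hq]
      split_ifs with h1 h2 h3 <;>
        first | ring1 | (exfalso; exact h3 ⟨h1, h2⟩) | (exfalso; exact h1 h3.1) |
          (exfalso; exact h2 h3.2) | (exfalso; exact h1 ⟨h2, h3⟩) | tauto
    rw [Finset.sum_congr rfl (fun r _ => hstep r), ← Finset.mul_sum, Finset.sum_boole,
      count_nbrs k s t hs ht p (cell_lt k s t hs ht q)]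
    -- now the RHS
    set r0 : Fin (cum s t k) :=
      ⟨st s t (cellN k s t p.val), st_lt_n k s t hs ht (cell_lt k s t hs ht p)⟩ with hr0def
    have hclr0 : cellN k s t r0.val = cellN k s t p.val := cell_rep k s t hs ht p
    have hr0rep : r0.val = st s t (cellN k s t r0.val) := by
      rw [hclr0]
    have hrhs : ∑ r : Fin (cum s t k), Pm k s t p r * Mm k s t hs ht r q =
        Pm k s t p r0 * Mm k s t hs ht r0 q := by
      apply Finset.sum_eq_single_of_mem r0 (Finset.mem_univ r0)
      intro r _ hne
      by_cases hr : r.val = st s t (cellN k s t r.val)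
      · have hP : Pm k s t p r = 0 := by
          rw [Pm, if_pos hr, if_neg]
          intro h
          apply hne
          apply Fin.ext
          rw [hr, ← h]
        rw [hP, zero_mul]
      · rw [Mm_nonrep_rep k s t hs ht hr hq, mul_zero]
    rw [hrhs, Mm_rep_rep k s t hs ht hr0rep hq]
    have hP0 : Pm k s t p r0 = 1 := by
      rw [Pm, if_pos hr0rep, if_pos hclr0.symm]
    rw [hP0, one_mul]
    have hfin : (⟨cellN k s t r0.val, (cellN_spec k s t hs ht r0.isLt).1⟩ : Fin (2*k)) =
        ⟨cellN k s t p.val, (cellN_spec k s t hs ht p.isLt).1⟩ := Fin.ext hclr0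
    rw [hfin, Bcal', Matrix.diagonal_mul,
      dq_eq_bqN k s t ht, Bq_eq_bqN k s t ht, deg_cast k s t hs ht p]
    rfl
  · -- q is not a representative
    set rq : Fin (cum s t k) :=
      ⟨st s t (cellN k s t q.val), st_lt_n k s t hs ht (cell_lt k s t hs ht q)⟩ with hrqdef
    have hclrq : cellN k s t rq.val = cellN k s t q.val := cell_rep k s t hs ht q
    have hrhs : ∑ r : Fin (cum s t k), Pm k s t p r * Mm k s t hs ht r q =
        Pm k s t p q * lam k s t (cellN k s t q.val) := by
      have hstep : ∀ r : Fin (cum s t k), Pm k s t p r * Mm k s t hs ht r q =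
          (if r = q then Pm k s t p r * lam k s t (cellN k s t q.val) else 0) := by
        intro r
        rw [Mm_nonrep_col k s t hs ht hq]
        split_ifs <;> ring
      rw [Finset.sum_congr rfl (fun r _ => hstep r), Finset.sum_ite_eq']
      simp only [Finset.mem_univ, if_true]
    have hlhs : ∑ r : Fin (cum s t k), NA (TG k s t) p r * Pm k s t r q =
        NA (TG k s t) p q - NA (TG k s t) p rq := by
      have hstep : ∀ r : Fin (cum s t k), NA (TG k s t) p r * Pm k s t r q =
          (if r = q then NA (TG k s t) p r else 0) -
          (if r = rq then NA (TG k s t) p r else 0) := by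
        intro r
        rw [Pm, if_neg hq]
        have hval : (r.val = st s t (cellN k s t q.val)) ↔ (r = rq) :=
          ⟨fun h => Fin.ext h, fun h => congrArg Fin.val h⟩
        by_cases hr1 : r = q
        · rw [hr1, if_pos rfl, if_pos rfl, if_neg hq,
            if_neg (fun h : q = rq => hq (congrArg Fin.val h))]
          ring
        · rw [if_neg hr1, if_neg hr1]
          by_cases hr2 : r = rq
          · rw [if_pos (hval.mpr hr2), if_pos hr2]; ring
          · rw [if_neg (fun h => hr2 (hval.mp h)), if_neg hr2]; ring
      rw [Finset.sum_congr rfl (fun r _ => hstep r), Finset.sum_sub_distrib,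
        Finset.sum_ite_eq', Finset.sum_ite_eq']
      simp only [Finset.mem_univ, if_true]
    rw [hrhs, hlhs]
    by_cases hodd : cellN k s t q.val % 2 = 1
    · rw [NA_apply, NA_apply, lam, if_pos hodd]
      have key := adj_odd k s t hs ht hodd hq (p := p)
      rw [Pm, if_neg hq]
      have : (((TG k s t).degree p : ℝ))⁻¹ * (if (TG k s t).Adj p q then (1:ℝ) else 0) -
          (((TG k s t).degree p : ℝ))⁻¹ * (if (TG k s t).Adj p rq then (1:ℝ) else 0) =
          (((TG k s t).degree p : ℝ))⁻¹ *
            ((if p = rq then (1:ℝ) else 0) - (if p = q then (1:ℝ) else 0)) := by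
        rw [← key]; ring
      rw [this]
      have hval : (p.val = st s t (cellN k s t q.val)) ↔ (p = rq) :=
        ⟨fun h => Fin.ext h, fun h => congrArg Fin.val h⟩
      by_cases hp1 : p = q
      · subst hp1
        rw [if_pos rfl, if_neg (fun h : p = rq => hq (congrArg Fin.val h)), if_neg hq]
        rw [deg_cast k s t hs ht]
        ring
      · by_cases hp2 : p = rq
        · rw [if_pos hp2, if_neg hp1, if_pos (hval.mpr hp2)]
          rw [deg_cast k s t hs ht, show cellN k s t p.val = cellN k s t q.val from by
            rw [hp2]; exact hclrq]
          ring
        · rw [if_neg hp1, if_neg hp2, if_neg (fun h => hp2 (hval.mp h))]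
          ring
    · rw [lam, if_neg hodd, mul_zero]
      have heven : cellN k s t q.val % 2 = 0 := by omega
      rw [NA_apply, NA_apply]
      have hiff := adj_even k s t hs ht (p := p) (q := q) heven
      by_cases hadj : (TG k s t).Adj p q
      · rw [if_pos hadj, if_pos (hiff.mp hadj)]; ring
      · rw [if_neg hadj, if_neg (fun h => hadj (hiff.mpr h))]; ring

end Intertwine

section Charpoly
open Polynomial

lemma sum_range_two_mul {M : Type*} [AddCommMonoid M] (N : ℕ) (f : ℕ → M) :
    ∑ c ∈ Finset.range (2 * N), f c = ∑ j ∈ Finset.range N, (f (2 * j) + f (2 * j + 1)) := by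
  induction N with
  | zero => simp
  | succ N ih =>
    rw [show 2 * (N + 1) = 2 * N + 1 + 1 by ring, Finset.sum_range_succ, Finset.sum_range_succ,
      ih, Finset.sum_range_succ, add_assoc]

lemma replicate_sum {α β : Type*} (s : Finset α) (m : α → ℕ) (x : β) :
    ∑ a ∈ s, Multiset.replicate (m a) x = Multiset.replicate (∑ a ∈ s, m a) x := by
  induction s using Finset.cons_induction with
  | empty => simp
  | cons a s ha ih => rw [Finset.sum_cons, Finset.sum_cons, ih, Multiset.replicate_add]

lemma map_val_eq_sum {α β : Type*} (s : Finset α) (f : α → β) :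
    Multiset.map f s.val = ∑ a ∈ s, ({f a} : Multiset β) := by
  induction s using Finset.cons_induction with
  | empty => simp
  | cons a s ha ih => rw [Finset.cons_val, Multiset.map_cons, Finset.sum_cons, ih,
      ← Multiset.singleton_add]

variable (k : ℕ) (s t : ℕ → ℕ)

lemma dN_odd (hs : ∀ i < k, 1 ≤ s i) (ht : ∀ i < k, 1 ≤ t i) {a : ℕ} (ha : a < k) :
    dN k s t (2 * a + 1) =
      (∑ i ∈ Finset.range k, t i) + (∑ j ∈ Finset.range (a + 1), s j) - 1 := by
  rw [dN, sum_range_two_mul]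
  have hsplit : ∀ j ∈ Finset.range k,
      bqN s t (2*a+1) (2*j) + bqN s t (2*a+1) (2*j+1) =
      (if j ≤ a then s j else 0) + (if j = a then t j - 1 else t j) := by
    intro j hj
    rcases lt_trichotomy j a with h | h | h
    · rw [bqN, if_pos (by omega), if_pos (by omega), bqN, if_pos (by omega), if_pos (by omega),
        if_pos (by omega), if_neg (by omega), sz, if_pos (by omega), sz, if_neg (by omega)]
      have e1 : 2 * j / 2 = j := by omega
      have e2 : (2 * j + 1) / 2 = j := by omega
      rw [e1, e2]
    · subst h
      rw [bqN, if_pos (by omega), if_pos (by omega), bqN, if_neg (by omega), if_pos rfl,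
        if_pos (by omega), if_pos rfl, sz, if_pos (by omega), sz, if_neg (by omega)]
      have e1 : 2 * j / 2 = j := by omega
      have e2 : (2 * j + 1) / 2 = j := by omega
      rw [e1, e2, if_pos (le_refl j)]
    · rw [bqN, if_neg (by omega), if_neg (by omega), if_neg (by omega), bqN,
        if_neg (by omega), if_neg (by omega), if_pos (by omega),
        if_neg (by omega), if_neg (by omega), sz, if_neg (by omega)]
      have e2 : (2 * j + 1) / 2 = j := by omega
      rw [e2]
  rw [Finset.sum_congr rfl hsplit, Finset.sum_add_distrib]
  have h1 : ∑ j ∈ Finset.range k, (if j ≤ a then s j else 0)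
      = ∑ j ∈ Finset.range (a + 1), s j := by
    rw [← Finset.sum_filter]
    congr 1
    ext j
    simp only [Finset.mem_filter, Finset.mem_range]
    omega
  have h2 : ∑ j ∈ Finset.range k, (if j = a then t j - 1 else t j)
      = (∑ j ∈ Finset.range k, t j) - 1 := by
    have hmem : a ∈ Finset.range k := Finset.mem_range.mpr ha
    rw [← Finset.add_sum_erase _ _ hmem, ← Finset.add_sum_erase _ t hmem, if_pos rfl]
    have : ∑ j ∈ (Finset.range k).erase a, (if j = a then t j - 1 else t j)
        = ∑ j ∈ (Finset.range k).erase a, t j :=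
      Finset.sum_congr rfl (fun j hj => if_neg (Finset.mem_erase.mp hj).1)
    rw [this]
    have := ht a ha
    omega
  rw [h1, h2]
  have hta : 1 ≤ t a := ht a ha
  have hle : t a ≤ ∑ j ∈ Finset.range k, t j :=
    Finset.single_le_sum (fun i _ => Nat.zero_le _) (Finset.mem_range.mpr ha)
  omega

lemma charpoly_conj {m : Type*} [Fintype m] [DecidableEq m]
    (P M Q : Matrix m m ℝ) (hPQ : P * Q = 1) : (P * M * Q).charpoly = M.charpoly := by
  have hcm : Matrix.charmatrix (P * M * Q) =
      (P.map C) * Matrix.charmatrix M * (Q.map C) := by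
    rw [Matrix.charmatrix, Matrix.charmatrix]
    rw [mul_sub, sub_mul]
    congr 1
    · have hc1 := (Matrix.scalar_commute (X : ℝ[X]) (fun r' => Commute.all _ _) (Q.map C)).eq
      have hc2 := (Matrix.scalar_commute (X : ℝ[X]) (fun r' => Commute.all _ _)
        ((P.map C) * (Q.map C))).eq
      have hscalar : (P.map C) * Matrix.scalar m (X : ℝ[X]) * (Q.map C)
          = Matrix.scalar m (X : ℝ[X]) * ((P.map C) * (Q.map C)) := by
        rw [mul_assoc, hc1, ← mul_assoc, hc2]
      rw [hscalar, ← Matrix.map_mul, hPQ]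
      simp
    · simp only [RingHom.mapMatrix_apply]
      rw [Matrix.map_mul, Matrix.map_mul]
  rw [Matrix.charpoly, Matrix.charpoly, hcm, Matrix.det_mul, Matrix.det_mul]
  have hdet : (P.map (C : ℝ →+* ℝ[X])).det * (Q.map C).det = 1 := by
    rw [← Matrix.det_mul, ← Matrix.map_mul, hPQ]
    simp
  calc Matrix.det (P.map C) * (Matrix.charmatrix M).det * (Q.map C).det
      = (Matrix.charmatrix M).det * ((P.map C).det * (Q.map C).det) := by ring
    _ = (Matrix.charmatrix M).det := by rw [hdet, mul_one]

lemma charpoly_Mm (hs : ∀ i < k, 1 ≤ s i) (ht : ∀ i < k, 1 ≤ t i) :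
    (Mm k s t hs ht).charpoly =
      (Bcal' k s t).charpoly * ∏ q : NR k s t, (X - C (lamS k s t q)) := by
  have h1 : Mm k s t hs ht = Matrix.reindex (cellEquiv k s t hs ht) (cellEquiv k s t hs ht)
      (Matrix.fromBlocks (Bcal' k s t) 0 0 (Matrix.diagonal (lamS k s t))) := rfl
  rw [h1, Matrix.charpoly_reindex, Matrix.charpoly_fromBlocks_zero₁₂]
  congr 1
  rw [Matrix.charpoly_of_upperTriangular _ (Matrix.blockTriangular_diagonal _)]
  exact Finset.prod_congr rfl (fun q _ => by rw [Matrix.diagonal_apply_eq])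

end Charpoly

section Final
open Polynomial
variable (k : ℕ) (s t : ℕ → ℕ)

lemma card_NR_fiber (hs : ∀ i < k, 1 ≤ s i) (ht : ∀ i < k, 1 ≤ t i) {c : ℕ} (hc : c < 2 * k) :
    ((Finset.univ : Finset (NR k s t)).filter
      fun q => cellN k s t q.val.val = c).card = sz s t c - 1 := by
  set repc : Fin (cum s t k) := ⟨st s t c, st_lt_n k s t hs ht hc⟩ with hrepc
  have hclrep : cellN k s t repc.val = c := cellN_st k s t hs ht hc
  have hcard : ((Finset.univ : Finset (NR k s t)).filter
      fun q => cellN k s t q.val.val = c).card =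
      (((Finset.univ : Finset (Fin (cum s t k))).filter
        fun q => cellN k s t q.val = c).erase repc).card := by
    refine Finset.card_bij' (fun q _ => q.val)
      (fun q hq => (⟨q, by
        have hmem := Finset.mem_erase.mp hq
        have hcq : cellN k s t q.val = c := (Finset.mem_filter.mp hmem.2).2
        intro h
        rw [hcq] at h
        exact hmem.1 (Fin.ext h)⟩ : NR k s t)) ?_ ?_ ?_ ?_
    · intro q hq
      have hcq : cellN k s t q.val.val = c := (Finset.mem_filter.mp hq).2
      rw [Finset.mem_erase]
      refine ⟨?_, ?_⟩
      · intro h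
        apply q.2
        rw [hcq]
        exact congrArg Fin.val h
      · simp only [Finset.mem_filter, Finset.mem_univ, true_and]
        exact hcq
    · intro q hq
      simp only [Finset.mem_filter, Finset.mem_univ, true_and]
      exact (Finset.mem_filter.mp (Finset.mem_erase.mp hq).2).2
    · intro q _; rfl
    · intro q _; rfl
  rw [hcard, Finset.card_erase_of_mem, card_cellset k s t hs ht hc]
  simp only [Finset.mem_filter, Finset.mem_univ, true_and]
  exact hclrep

lemma lam_multiset (hs : ∀ i < k, 1 ≤ s i) (ht : ∀ i < k, 1 ≤ t i) :
    Multiset.map (lamS k s t) (Finset.univ : Finset (NR k s t)).val =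
      Multiset.replicate ((∑ i ∈ Finset.range k, s i) - k) (0 : ℝ) +
        ∑ i ∈ Finset.range k,
          Multiset.replicate (t i - 1)
            (-1 / (((∑ i' ∈ Finset.range k, t i') +
              (∑ j ∈ Finset.range (i + 1), s j) - 1 : ℕ) : ℝ)) := by
  rw [map_val_eq_sum]
  rw [← Finset.sum_fiberwise_of_maps_to
    (g := fun q : NR k s t => cellN k s t q.val.val) (t := Finset.range (2 * k))
    (fun q _ => Finset.mem_range.mpr (cell_lt k s t hs ht q.val))
    (fun q => ({lamS k s t q} : Multiset ℝ))]
  have hinner : ∀ c ∈ Finset.range (2 * k),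
      (∑ q ∈ (Finset.univ : Finset (NR k s t)).filter
        (fun q => cellN k s t q.val.val = c), ({lamS k s t q} : Multiset ℝ)) =
      Multiset.replicate (sz s t c - 1) (lam k s t c) := by
    intro c hc
    have hval : ∀ q ∈ (Finset.univ : Finset (NR k s t)).filter
        (fun q => cellN k s t q.val.val = c), ({lamS k s t q} : Multiset ℝ) =
        ({lam k s t c} : Multiset ℝ) := by
      intro q hq
      have := (Finset.mem_filter.mp hq).2
      rw [lamS, this]
    rw [Finset.sum_congr rfl hval, Finset.sum_const,
      card_NR_fiber k s t hs ht (Finset.mem_range.mp hc), Multiset.nsmul_singleton]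
  rw [Finset.sum_congr rfl hinner, sum_range_two_mul]
  have hpair : ∀ i ∈ Finset.range k,
      (Multiset.replicate (sz s t (2 * i) - 1) (lam k s t (2 * i)) +
        Multiset.replicate (sz s t (2 * i + 1) - 1) (lam k s t (2 * i + 1))) =
      (Multiset.replicate (s i - 1) (0:ℝ) +
        Multiset.replicate (t i - 1)
          (-1 / (((∑ i' ∈ Finset.range k, t i') +
            (∑ j ∈ Finset.range (i + 1), s j) - 1 : ℕ) : ℝ))) := by
    intro i hi
    have hik : i < k := Finset.mem_range.mp hi
    have e1 : sz s t (2 * i) = s i := by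
      rw [sz, if_pos (by omega)]
      congr 1
      omega
    have e2 : sz s t (2 * i + 1) = t i := by
      rw [sz, if_neg (by omega)]
      congr 1
      omega
    have e3 : lam k s t (2 * i) = 0 := by rw [lam, if_neg (by omega)]
    have e4 : lam k s t (2 * i + 1) =
        -1 / (((∑ i' ∈ Finset.range k, t i') +
          (∑ j ∈ Finset.range (i + 1), s j) - 1 : ℕ) : ℝ) := by
      rw [lam, if_pos (by omega), dN_odd k s t hs ht hik, neg_div, one_div]
    rw [e1, e2, e3, e4]
  rw [Finset.sum_congr rfl hpair, Finset.sum_add_distrib, replicate_sum]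
  congr 2
  have h1 : ∑ i ∈ Finset.range k, (s i - 1) + ∑ i ∈ Finset.range k, 1
      = ∑ i ∈ Finset.range k, s i := by
    rw [← Finset.sum_add_distrib]
    exact Finset.sum_congr rfl (fun i hi => by
      have := hs i (Finset.mem_range.mp hi); omega)
  have h2 : ∑ i ∈ Finset.range k, 1 = k := by simp
  omega

end Final

/-- For a connected threshold graph `0^{s₁}1^{t₁}⋯0^{s_k}1^{t_k}`,
the spectrum (with multiplicity) of the normalized adjacency matrix `𝒜` is the
union of the spectrum of the normalized quotient matrix `ℬ_π` and the multiset
`T` consisting of `0` with multiplicity `s - k` and `-1/(t + Sᵢ - 1)` with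
multiplicity `tᵢ - 1` for each `i`. -/
theorem threshold_spectrum_decomposition (k : ℕ) (s t : ℕ → ℕ) (hk : 1 ≤ k)
    (hs : ∀ i < k, 1 ≤ s i) (ht : ∀ i < k, 1 ≤ t i) :
    let tt := ∑ i ∈ Finset.range k, t i
    (NA (TG k s t)).charpoly.roots =
      (Bcal k s t).charpoly.roots +
      (Multiset.replicate ((∑ i ∈ Finset.range k, s i) - k) (0 : ℝ) +
        ∑ i ∈ Finset.range k,
          Multiset.replicate (t i - 1)
            (-1 / ((tt + (∑ j ∈ Finset.range (i + 1), s j) - 1 : ℕ) : ℝ))) := by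
  intro tt
  have hQP := QP_eq k s t hs ht
  have hPQ : Pm k s t * Qm k s t = 1 := mul_eq_one_comm.mp hQP
  have hNA : NA (TG k s t) = Pm k s t * Mm k s t hs ht * Qm k s t := by
    calc NA (TG k s t) = NA (TG k s t) * (Pm k s t * Qm k s t) := by rw [hPQ, mul_one]
      _ = (NA (TG k s t) * Pm k s t) * Qm k s t := by rw [mul_assoc]
      _ = (Pm k s t * Mm k s t hs ht) * Qm k s t := by rw [NAP_eq k s t hs ht]
  rw [hNA, charpoly_conj _ _ _ hPQ, charpoly_Mm k s t hs ht]
  have hBc : Bcal' k s t = Bcal k s t := rfl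
  rw [hBc]
  have hne : (Bcal k s t).charpoly * (∏ q : NR k s t, (X - C (lamS k s t q))) ≠ 0 :=
    mul_ne_zero (Matrix.charpoly_monic _).ne_zero
      ((Polynomial.monic_prod_of_monic _ _ (fun q _ => Polynomial.monic_X_sub_C _)).ne_zero)
  rw [Polynomial.roots_mul hne]
  congr 1
  have hprod : (∏ q : NR k s t, (X - C (lamS k s t q))) =
      (Multiset.map (fun a => X - C a)
        (Multiset.map (lamS k s t) (Finset.univ : Finset (NR k s t)).val)).prod := by
    rw [Multiset.map_map, Finset.prod_eq_multiset_prod]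
    rfl
  rw [hprod, Polynomial.roots_multiset_prod_X_sub_C, lam_multiset k s t hs ht]
end

section
/- Let Γ be a connected threshold graph on n vertices with string 0^{s₁}1^{t₁}⋯0^{s_k}1^{t_k} and let λ₁ be the smallest eigenvalue of its normalized adjacency matrix. Then −(n − t_k)/(n − 1) ≤ λ₁ ≤ −1/(t + s₁ − 1), where t = Σtᵢ. -/
open Matrix Polynomial BigOperators Finset

/- ### Auxiliary general lemmas -/

lemma dobrushin {n : ℕ} (P : Matrix (Fin n) (Fin n) ℝ)
    (hrow : ∀ i, ∑ j, P i j = 1)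
    (γ : ℝ) (hγ : ∀ a b : Fin n, γ ≤ ∑ j, min (P a j) (P b j))
    {lam : ℝ} {v : Fin n → ℝ} (hv : v ≠ 0) (heig : P.mulVec v = lam • v) :
    -(1 - γ) ≤ lam := by
  have hn : 0 < n := by
    rcases Nat.eq_zero_or_pos n with h | h
    · exfalso; apply hv; funext i; exact absurd i.2 (by omega)
    · exact h
  haveI : NeZero n := ⟨hn.ne'⟩
  have hne : (univ : Finset (Fin n)).Nonempty := univ_nonempty
  obtain ⟨a, -, ha⟩ := Finset.exists_max_image univ v hne
  obtain ⟨b, -, hb⟩ := Finset.exists_min_image univ v hne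
  have hγ1 : γ ≤ 1 := by
    have := hγ a a
    simpa [hrow a] using this
  by_cases hab : v a = v b
  · have hconst : ∀ i, v i = v a := fun i =>
      le_antisymm (ha i (mem_univ i)) (hab ▸ hb i (mem_univ i))
    have hva : v a ≠ 0 := by
      intro h0
      apply hv; funext i; rw [hconst i, h0]; rfl
    have h1 : lam * v a = v a := by
      have := congrFun heig a
      simp only [mulVec, dotProduct, Pi.smul_apply, smul_eq_mul] at this
      rw [show ∑ j, P a j * v j = ∑ j, P a j * v a from
        Finset.sum_congr rfl fun j _ => by rw [hconst j], ← Finset.sum_mul, hrow a,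
        one_mul] at this
      linarith [this]
    have : lam = 1 := mul_right_cancel₀ hva (h1.trans (one_mul (v a)).symm)
    rw [this]; linarith
  · have hlt : v b < v a := lt_of_le_of_ne (hb a (mem_univ a)) (Ne.symm hab)
    set c : Fin n → ℝ := fun j => min (P a j) (P b j) with hc
    set g : ℝ := ∑ j, c j with hg
    have hgγ : γ ≤ g := hγ a b
    have hca : ∀ j, c j ≤ P a j := fun j => min_le_left _ _
    have hcb : ∀ j, c j ≤ P b j := fun j => min_le_right _ _
    have hA : (1 - g) * v b ≤ ∑ j, (P a j - c j) * v j := by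
      rw [show (1 - g) = ∑ j, (P a j - c j) by rw [Finset.sum_sub_distrib, hrow a]]
      rw [Finset.sum_mul]
      exact Finset.sum_le_sum fun j _ =>
        mul_le_mul_of_nonneg_left (hb j (mem_univ j)) (by linarith [hca j])
    have hB : ∑ j, (P b j - c j) * v j ≤ (1 - g) * v a := by
      rw [show (1 - g) = ∑ j, (P b j - c j) by rw [Finset.sum_sub_distrib, hrow b]]
      rw [Finset.sum_mul]
      exact Finset.sum_le_sum fun j _ =>
        mul_le_mul_of_nonneg_left (ha j (mem_univ j)) (by linarith [hcb j])
    have hkey : lam * (v a - v b) ≥ -(1 - g) * (v a - v b) := by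
      have hva : lam * v a = ∑ j, P a j * v j := by
        have := congrFun heig a
        simp only [mulVec, dotProduct, Pi.smul_apply, smul_eq_mul] at this
        linarith [this]
      have hvb : lam * v b = ∑ j, P b j * v j := by
        have := congrFun heig b
        simp only [mulVec, dotProduct, Pi.smul_apply, smul_eq_mul] at this
        linarith [this]
      have expand : lam * (v a - v b)
          = (∑ j, (P a j - c j) * v j) - ∑ j, (P b j - c j) * v j := by
        rw [mul_sub, hva, hvb]
        simp only [sub_mul, Finset.sum_sub_distrib]
        ring
      rw [expand]
      nlinarith [hA, hB]
    have h1g : 1 - g ≤ 1 - γ := by linarith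
    have : -(1 - γ) * (v a - v b) ≤ lam * (v a - v b) := by
      nlinarith [hkey, hlt]
    exact le_of_mul_le_mul_right this (by linarith)

lemma exists_eig_le_rayleigh {n : ℕ} (hn : 0 < n) (S : Matrix (Fin n) (Fin n) ℝ)
    (hS : S.IsHermitian) (x : Fin n → ℝ) (hx : x ≠ 0) :
    ∃ (μ : ℝ) (y : Fin n → ℝ), y ≠ 0 ∧ S.mulVec y = μ • y ∧
      μ ≤ (S.mulVec x ⬝ᵥ x) / (x ⬝ᵥ x) := by
  haveI : NeZero n := ⟨hn.ne'⟩
  haveI : Nontrivial (EuclideanSpace ℝ (Fin n)) :=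
    (WithLp.equiv 2 (Fin n → ℝ)).nontrivial
  set T : EuclideanSpace ℝ (Fin n) →ₗ[ℝ] EuclideanSpace ℝ (Fin n) := Matrix.toEuclideanLin S
  have hsym : T.IsSymmetric := Matrix.isHermitian_iff_isSymmetric.mp hS
  have hEig := hsym.hasEigenvalue_iInf_of_finiteDimensional
  set r : ℝ := (⨅ z : { z : EuclideanSpace ℝ (Fin n) // z ≠ 0 },
      RCLike.re (inner ℝ (T z) (z : EuclideanSpace ℝ (Fin n)) : ℝ) / ‖(z : EuclideanSpace ℝ (Fin n))‖ ^ 2) with hr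
  obtain ⟨y, hy⟩ := hEig.exists_hasEigenvector
  have hTy : T y = r • y := hy.apply_eq_smul
  refine ⟨r, WithLp.equiv 2 (Fin n → ℝ) y, ?_, ?_, ?_⟩
  · simpa using hy.right
  · have := congrArg (WithLp.equiv 2 (Fin n → ℝ)) hTy
    simpa [T, Matrix.toEuclideanLin_apply, Matrix.toLin'_apply] using this
  · set x₀ : EuclideanSpace ℝ (Fin n) := (WithLp.equiv 2 (Fin n → ℝ)).symm x with hx₀
    have hx₀ne : x₀ ≠ 0 := by
      simpa [hx₀] using hx
    have hbdd : BddBelow (Set.range fun z : { z : EuclideanSpace ℝ (Fin n) // z ≠ 0 } =>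
        RCLike.re (inner ℝ (T z) (z : EuclideanSpace ℝ (Fin n)) : ℝ) / ‖(z : EuclideanSpace ℝ (Fin n))‖ ^ 2) := by
      set Tc := LinearMap.toContinuousLinearMap T
      refine ⟨-‖Tc‖, ?_⟩
      rintro q ⟨z, rfl⟩
      have hz : (0:ℝ) < ‖(z : EuclideanSpace ℝ (Fin n))‖ ^ 2 := by
        have : ‖(z : EuclideanSpace ℝ (Fin n))‖ ≠ 0 := norm_ne_zero_iff.mpr z.2
        positivity
      show -‖Tc‖ ≤ RCLike.re (inner ℝ (T z) (z : EuclideanSpace ℝ (Fin n)) : ℝ) / ‖(z : EuclideanSpace ℝ (Fin n))‖ ^ 2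
      rw [le_div_iff₀ hz]
      have h1 : |(inner ℝ (T z) (z : EuclideanSpace ℝ (Fin n)) : ℝ)| ≤
          ‖T (z : EuclideanSpace ℝ (Fin n))‖ * ‖(z : EuclideanSpace ℝ (Fin n))‖ :=
        abs_real_inner_le_norm _ _
      have h2 : ‖T (z : EuclideanSpace ℝ (Fin n))‖ ≤ ‖Tc‖ * ‖(z : EuclideanSpace ℝ (Fin n))‖ :=
        Tc.le_opNorm _
      have h3 : (0:ℝ) ≤ ‖(z : EuclideanSpace ℝ (Fin n))‖ := norm_nonneg _
      simp only [RCLike.re_to_real]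
      nlinarith [abs_nonneg (inner ℝ (T z) (z : EuclideanSpace ℝ (Fin n)) : ℝ),
        neg_abs_le (inner ℝ (T z) (z : EuclideanSpace ℝ (Fin n)) : ℝ)]
    have hle : r ≤ RCLike.re (inner ℝ (T x₀) (x₀ : EuclideanSpace ℝ (Fin n)) : ℝ) / ‖x₀‖ ^ 2 :=
      ciInf_le hbdd ⟨x₀, hx₀ne⟩
    have hinner : (inner ℝ (T x₀) x₀ : ℝ) = S.mulVec x ⬝ᵥ x := by
      rw [PiLp.inner_apply]
      simp only [RCLike.inner_apply, conj_trivial]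
      have hTx : T x₀ = (WithLp.equiv 2 (Fin n → ℝ)).symm (S.mulVec x) := rfl
      rw [hTx]
      rw [dotProduct]; exact Finset.sum_congr rfl fun i _ => mul_comm _ _
    have hnorm : ‖x₀‖ ^ 2 = x ⬝ᵥ x := by
      rw [EuclideanSpace.norm_eq, Real.sq_sqrt (by positivity)]
      simp only [Real.norm_eq_abs, sq_abs]
      rw [show x ⬝ᵥ x = ∑ i, x i ^ 2 by simp [dotProduct, sq]]
      rfl
    rw [hinner, hnorm] at hle
    simpa using hle

/- ### Threshold graph combinatorics -/

lemma cum_le_cum (s t : ℕ → ℕ) {i j : ℕ} (h : i ≤ j) : cum s t i ≤ cum s t j :=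
  Finset.sum_le_sum_of_subset (Finset.range_subset_range.2 h)

lemma cum_succ (s t : ℕ → ℕ) (i : ℕ) : cum s t (i + 1) = cum s t i + (s i + t i) :=
  Finset.sum_range_succ (fun j => s j + t j) i

lemma isOne_of_ge (k : ℕ) (s t : ℕ → ℕ) (hk : 1 ≤ k) {p : ℕ}
    (hp1 : cum s t (k-1) + s (k-1) ≤ p) (hp2 : p < cum s t k) :
    isOne k s t p = true := by
  have hEq : cum s t k = cum s t (k-1) + (s (k-1) + t (k-1)) := by
    conv_lhs => rw [show k = (k-1) + 1 by omega]
    exact cum_succ s t (k-1)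
  rw [isOne, decide_eq_true_eq]
  exact ⟨k - 1, by omega, hp1, by omega⟩

lemma isOne_lt_s0 (k : ℕ) (s t : ℕ → ℕ) {p : ℕ} (hp : p < s 0) :
    isOne k s t p = false := by
  rw [isOne, decide_eq_false_iff_not]
  rintro ⟨i, hik, h1, h2⟩
  rcases Nat.eq_zero_or_pos i with rfl | hi
  · simp [cum] at h1; omega
  · have : cum s t 1 ≤ cum s t i := cum_le_cum s t hi
    have h1' : cum s t 1 = s 0 + t 0 := by simp [cum]
    omega

lemma isOne_s0 (k : ℕ) (s t : ℕ → ℕ) (hk : 1 ≤ k) (ht0 : 1 ≤ t 0) :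
    isOne k s t (s 0) = true := by
  rw [isOne, decide_eq_true_eq]
  refine ⟨0, hk, ?_, ?_⟩ <;> simp [cum] <;> omega

lemma ones_card_le (k : ℕ) (s t : ℕ → ℕ) :
    (((Finset.range (cum s t k))).filter (fun p => isOne k s t p = true)).card
      ≤ ∑ i ∈ Finset.range k, t i := by
  have hsub : ((Finset.range (cum s t k)).filter (fun p => isOne k s t p = true)) ⊆
      (Finset.range k).biUnion (fun i => Finset.Ico (cum s t i + s i) (cum s t i + s i + t i)) := by
    intro p hp
    obtain ⟨-, hone⟩ := Finset.mem_filter.mp hp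
    rw [isOne, decide_eq_true_eq] at hone
    obtain ⟨i, hik, h1, h2⟩ := hone
    exact Finset.mem_biUnion.mpr ⟨i, Finset.mem_range.mpr hik, Finset.mem_Ico.mpr ⟨h1, h2⟩⟩
  calc _ ≤ _ := Finset.card_le_card hsub
    _ ≤ ∑ i ∈ Finset.range k, (Finset.Ico (cum s t i + s i) (cum s t i + s i + t i)).card :=
        Finset.card_biUnion_le
    _ = ∑ i ∈ Finset.range k, t i := by
        refine Finset.sum_congr rfl fun i _ => ?_
        rw [Nat.card_Ico]; omega

/- ### Main theorem -/

/-- For a connected threshold graph on `n` vertices with string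
`0^{s₁}1^{t₁}⋯0^{s_k}1^{t_k}`, the smallest eigenvalue `λ₁` of the normalized
adjacency matrix satisfies `-(n - t_k)/(n - 1) ≤ λ₁ ≤ -1/(t + s₁ - 1)`. -/
theorem threshold_smallest_eigenvalue_bounds (k : ℕ) (s t : ℕ → ℕ) (hk : 1 ≤ k)
    (hs : ∀ i < k, 1 ≤ s i) (ht : ∀ i < k, 1 ≤ t i) :
    let n := cum s t k
    let tt := ∑ i ∈ Finset.range k, t i
    let M := NA (TG k s t)
    ∃ lam1 : ℝ,
      (∃ v : Fin n → ℝ, v ≠ 0 ∧ M.mulVec v = lam1 • v) ∧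
      (∀ μ : ℝ, (∃ v : Fin n → ℝ, v ≠ 0 ∧ M.mulVec v = μ • v) → lam1 ≤ μ) ∧
      -(((n : ℝ) - t (k - 1)) / ((n : ℝ) - 1)) ≤ lam1 ∧
      lam1 ≤ -1 / ((tt : ℝ) + (s 0 : ℝ) - 1) := by
  intro n tt M
  set G := TG k s t with hGdef
  -- numeric facts
  have ht1 : 1 ≤ t (k-1) := ht _ (by omega)
  have hs1 : 1 ≤ s (k-1) := hs _ (by omega)
  have hs01 : 1 ≤ s 0 := hs 0 hk
  have ht01 : 1 ≤ t 0 := ht 0 hk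
  have hcum1 : cum s t 1 = s 0 + t 0 := by simp [cum]
  have hn1 : cum s t 1 ≤ n := cum_le_cum s t hk
  have hNeq : n = cum s t (k-1) + s (k-1) + t (k-1) := by
    have h2 := cum_succ s t (k-1)
    rw [show k - 1 + 1 = k by omega] at h2
    omega
  set c' := cum s t (k-1) + s (k-1) with hc'def
  have hc'1 : 1 ≤ c' := by omega
  have hn2 : 2 ≤ n := by omega
  have htt1 : 1 ≤ tt :=
    le_trans ht01 (Finset.single_le_sum (f := t) (fun i _ => Nat.zero_le _) (Finset.mem_range.mpr hk))
  have hs0n : s 0 < n := by omega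
  have hnR : (2:ℝ) ≤ (n:ℝ) := by exact_mod_cast hn2
  -- adjacency basics
  have hvmax : ∀ i j : Fin n, (max i j).val = max i.val j.val := by
    intro i j
    rcases le_total i j with h | h
    · rw [max_eq_right h, max_eq_right (Fin.le_def.mp h)]
    · rw [max_eq_left h, max_eq_left (Fin.le_def.mp h)]
  have hAdj : ∀ i j : Fin n, G.Adj i j ↔ i ≠ j ∧ isOne k s t (max i.val j.val) = true := by
    intro i j
    show (i ≠ j ∧ isOne k s t (max i j).val = true) ↔ _
    rw [hvmax]
  have hdom : ∀ w q : Fin n, c' ≤ w.val → w ≠ q → G.Adj w q := by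
    intro w q hw hne
    rw [hAdj]
    refine ⟨hne, isOne_of_ge k s t hk (le_trans hw (le_max_left _ _)) ?_⟩
    exact max_lt w.2 q.2
  -- degree facts
  have hdeg_pos : ∀ i : Fin n, 0 < G.degree i := by
    intro i
    rw [SimpleGraph.degree_pos_iff_exists_adj]
    by_cases hi : c' ≤ i.val
    · refine ⟨⟨0, by omega⟩, hdom i _ hi ?_⟩
      intro h
      have := congrArg Fin.val h
      simp at this
      omega
    · refine ⟨⟨n-1, by omega⟩, (hdom ⟨n-1, by omega⟩ i (by simp; omega) ?_).symm⟩
      intro h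
      have := congrArg Fin.val h
      simp at this
      omega
  have hdeg_le : ∀ i : Fin n, G.degree i ≤ n - 1 := by
    intro i
    have := G.degree_lt_card_verts i
    rw [Fintype.card_fin] at this
    omega
  have hdeg_leR : ∀ i : Fin n, (G.degree i : ℝ) ≤ (n : ℝ) - 1 := by
    intro i
    have := hdeg_le i
    have : (G.degree i : ℝ) ≤ ((n - 1 : ℕ) : ℝ) := Nat.cast_le.mpr this
    rwa [Nat.cast_sub (by omega), Nat.cast_one] at this
  have hdeg_posR : ∀ i : Fin n, (0:ℝ) < (G.degree i : ℝ) := by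
    intro i; exact_mod_cast hdeg_pos i
  -- M entries
  have hM : ∀ i j : Fin n, M i j = ((G.degree i : ℝ))⁻¹ * (if G.Adj i j then 1 else 0) := by
    intro i j
    show (NA (TG k s t)) i j = _
    rw [NA, Matrix.diagonal_mul, SimpleGraph.adjMatrix_apply]
  have hrow : ∀ i : Fin n, ∑ j, M i j = 1 := by
    intro i
    rw [Finset.sum_congr rfl (fun j _ => hM i j), ← Finset.mul_sum]
    rw [Finset.sum_boole, ← SimpleGraph.neighborFinset_eq_filter]
    exact inv_mul_cancel₀ (ne_of_gt (hdeg_posR i))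
  have hMadj : ∀ i j : Fin n, G.Adj i j → M i j = ((G.degree i : ℝ))⁻¹ := by
    intro i j h
    rw [hM i j, if_pos h, mul_one]
  have hMnn : ∀ i j : Fin n, 0 ≤ M i j := by
    intro i j
    rw [hM]
    split
    · positivity
    · simp
  -- the eigenvalue set
  set Eset : Set ℝ := {μ | ∃ v : Fin n → ℝ, v ≠ 0 ∧ M.mulVec v = μ • v} with hEsetdef
  have hroot : ∀ μ ∈ Eset, (M.charpoly).IsRoot μ := by
    rintro μ ⟨v, hv, hMv⟩
    have h0 : (μ • (1 : Matrix (Fin n) (Fin n) ℝ) - M).mulVec v = 0 := by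
      rw [Matrix.sub_mulVec, Matrix.smul_mulVec, Matrix.one_mulVec, hMv, sub_self]
    have hdet : (μ • (1 : Matrix (Fin n) (Fin n) ℝ) - M).det = 0 :=
      (Matrix.exists_mulVec_eq_zero_iff).mp ⟨v, hv, h0⟩
    have heval : (M.charpoly).eval μ = (μ • (1 : Matrix (Fin n) (Fin n) ℝ) - M).det := by
      rw [Matrix.charpoly, ← Polynomial.coe_evalRingHom, RingHom.map_det]
      congr 1
      ext i j
      by_cases hij : i = j
      · subst hij
        simp [Matrix.charmatrix_apply_eq, Matrix.one_apply_eq]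
      · simp [Matrix.charmatrix_apply_ne _ _ _ hij, Matrix.one_apply_ne hij]
    rw [Polynomial.IsRoot, heval, hdet]
  have hfin : Eset.Finite := by
    apply Set.Finite.subset (M.charpoly.roots.toFinset : Finset ℝ).finite_toSet
    intro μ hμ
    simp only [Finset.coe_sort_coe, Finset.mem_coe, Multiset.mem_toFinset]
    exact Polynomial.mem_roots'.mpr ⟨M.charpoly_monic.ne_zero, hroot μ hμ⟩
  have hone_mem : (1 : ℝ) ∈ Eset := by
    refine ⟨fun _ => 1, ?_, ?_⟩
    · intro h
      have := congrFun h ⟨0, by omega⟩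
      simpa using this
    · funext i
      simp only [Matrix.mulVec, dotProduct, mul_one, Pi.smul_apply, smul_eq_mul, one_mul]
      exact hrow i
  have hEne : hfin.toFinset.Nonempty := ⟨1, hfin.mem_toFinset.mpr hone_mem⟩
  set lam1 := hfin.toFinset.min' hEne with hlam1def
  have hlam1mem : lam1 ∈ Eset := hfin.mem_toFinset.mp (Finset.min'_mem _ _)
  have hlam1min : ∀ μ ∈ Eset, lam1 ≤ μ := fun μ hμ =>
    Finset.min'_le _ _ (hfin.mem_toFinset.mpr hμ)
  refine ⟨lam1, hlam1mem, fun μ hμ => hlam1min μ hμ, ?_, ?_⟩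
  · -- lower bound via Dobrushin
    obtain ⟨v, hv, hMv⟩ := hlam1mem
    set γ : ℝ := ((t (k-1) : ℝ) - 1) / ((n : ℝ) - 1) with hγdef
    have hγc : ∀ a b : Fin n, γ ≤ ∑ j, min (M a j) (M b j) := by
      intro a b
      obtain ⟨W, hWcard, hWadj⟩ : ∃ W : Finset (Fin n),
          t (k-1) - 1 ≤ W.card ∧ ∀ j ∈ W, G.Adj a j ∧ G.Adj b j := by
        set Tf : Finset (Fin n) := univ.filter (fun w => c' ≤ w.val) with hTfdef
        have hTcard : t (k-1) ≤ Tf.card := by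
          have h1 : (Finset.Ico c' n).card = t (k-1) := by rw [Nat.card_Ico]; omega
          rw [← h1]
          apply Finset.card_le_card_of_injOn (fun p => (⟨min p (n-1), by omega⟩ : Fin n))
          · intro p hp
            rw [Finset.mem_coe, Finset.mem_Ico] at hp
            simp only [Finset.mem_coe, hTfdef, Finset.mem_filter, Finset.mem_univ, true_and]
            show c' ≤ min p (n-1)
            omega
          · intro p hp q hq hpq
            rw [Finset.mem_coe, Finset.mem_Ico] at hp hq
            have : min p (n-1) = min q (n-1) := congrArg Fin.val hpq
            omega
        have hTfadj : ∀ j ∈ Tf, ∀ z : Fin n, j ≠ z → G.Adj z j := by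
          intro j hj z hz
          rw [hTfdef, Finset.mem_filter] at hj
          exact (hdom j z hj.2 hz).symm
        by_cases hab : c' ≤ a.val ∧ c' ≤ b.val
        · refine ⟨(univ.erase a).erase b, ?_, ?_⟩
          · have e1 : ((univ : Finset (Fin n)).erase a).card = n - 1 := by
              rw [Finset.card_erase_of_mem (mem_univ a), Finset.card_univ, Fintype.card_fin]
            have e2 := Finset.pred_card_le_card_erase (s := (univ : Finset (Fin n)).erase a) (a := b)
            omega
          · intro j hj
            have hjb : j ≠ b := Finset.ne_of_mem_erase hj
            have hja : j ≠ a := Finset.ne_of_mem_erase (Finset.mem_of_mem_erase hj)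
            exact ⟨hdom a j hab.1 (Ne.symm hja), hdom b j hab.2 (Ne.symm hjb)⟩
        · refine ⟨(Tf.erase a).erase b, ?_, ?_⟩
          · rcases not_and_or.mp hab with h | h
            · have ha' : a ∉ Tf := by
                rw [hTfdef, Finset.mem_filter]; tauto
              rw [Finset.erase_eq_of_notMem ha']
              have := Finset.pred_card_le_card_erase (s := Tf) (a := b)
              omega
            · have hb' : b ∉ Tf.erase a := fun hmem => by
                have := Finset.mem_of_mem_erase hmem
                rw [hTfdef, Finset.mem_filter] at this; tauto
              rw [Finset.erase_eq_of_notMem hb']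
              have := Finset.pred_card_le_card_erase (s := Tf) (a := a)
              omega
          · intro j hj
            have hjb : j ≠ b := Finset.ne_of_mem_erase hj
            have hja : j ≠ a := Finset.ne_of_mem_erase (Finset.mem_of_mem_erase hj)
            have hjT : j ∈ Tf := Finset.mem_of_mem_erase (Finset.mem_of_mem_erase hj)
            exact ⟨hTfadj j hjT a hja, hTfadj j hjT b hjb⟩
      have step1 : ∀ j ∈ W, ((n:ℝ) - 1)⁻¹ ≤ min (M a j) (M b j) := by
        intro j hj
        obtain ⟨h1, h2⟩ := hWadj j hj
        rw [hMadj a j h1, hMadj b j h2]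
        exact le_min (inv_anti₀ (hdeg_posR a) (hdeg_leR a))
          (inv_anti₀ (hdeg_posR b) (hdeg_leR b))
      calc γ ≤ (W.card : ℝ) * ((n:ℝ) - 1)⁻¹ := by
              rw [hγdef, div_eq_mul_inv]
              apply mul_le_mul_of_nonneg_right _ (inv_nonneg.mpr (by linarith [hnR]))
              calc ((t (k-1):ℝ) - 1) = ((t (k-1) - 1 : ℕ) : ℝ) := by
                    rw [Nat.cast_sub ht1, Nat.cast_one]
                _ ≤ (W.card : ℝ) := Nat.cast_le.mpr hWcard
        _ = ∑ _j ∈ W, ((n:ℝ) - 1)⁻¹ := by rw [Finset.sum_const, nsmul_eq_mul]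
        _ ≤ ∑ j ∈ W, min (M a j) (M b j) := Finset.sum_le_sum step1
        _ ≤ ∑ j, min (M a j) (M b j) := by
              apply Finset.sum_le_sum_of_subset_of_nonneg (Finset.subset_univ W)
              intro j _ _
              exact le_min (hMnn a j) (hMnn b j)
    have hdob := dobrushin M hrow γ hγc hv hMv
    have hconst : -(1 - γ) = -(((n : ℝ) - t (k-1)) / ((n : ℝ) - 1)) := by
      rw [hγdef]
      have hne : ((n:ℝ) - 1) ≠ 0 := by
        have : (2:ℝ) ≤ (n:ℝ) := by exact_mod_cast hn2
        linarith
      field_simp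
      ring
    rw [hconst] at hdob
    exact hdob
  · -- upper bound via Rayleigh
    set u0 : Fin n := ⟨0, by omega⟩ with hu0def
    set w0 : Fin n := ⟨s 0, hs0n⟩ with hw0def
    have huw : u0 ≠ w0 := by
      intro h
      have := congrArg Fin.val h
      simp only [hu0def, hw0def] at this
      omega
    have hadj : G.Adj u0 w0 := by
      rw [hAdj]
      refine ⟨huw, ?_⟩
      have : max u0.val w0.val = s 0 := by simp [hu0def, hw0def]
      rw [this]
      exact isOne_s0 k s t hk ht01
    -- degree bounds
    set ones : Finset ℕ := (Finset.range n).filter (fun p => isOne k s t p = true) with honesdef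
    have hones_le : ones.card ≤ tt := ones_card_le k s t
    have hs0ones : s 0 ∈ ones := by
      rw [honesdef, Finset.mem_filter]
      exact ⟨Finset.mem_range.mpr hs0n, isOne_s0 k s t hk ht01⟩
    have hdeg_u0 : G.degree u0 ≤ tt := by
      rw [← SimpleGraph.card_neighborFinset_eq_degree]
      refine le_trans (Finset.card_le_card_of_injOn (fun q => q.val) ?_ ?_) hones_le
      · intro q hq
        rw [Finset.mem_coe, SimpleGraph.mem_neighborFinset, hAdj] at hq
        obtain ⟨hne, hone⟩ := hq
        have hmax : max u0.val q.val = q.val := by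
          simp [hu0def]
        rw [hmax] at hone
        rw [Finset.mem_coe, honesdef, Finset.mem_filter]
        exact ⟨Finset.mem_range.mpr q.2, hone⟩
      · intro p _ q _ h
        exact Fin.val_injective h
    have hdeg_w0 : G.degree w0 ≤ s 0 + (tt - 1) := by
      rw [← SimpleGraph.card_neighborFinset_eq_degree]
      have hsub : (G.neighborFinset w0).image (fun q => q.val) ⊆
          (Finset.range (s 0)) ∪ (ones.erase (s 0)) := by
        intro p hp
        obtain ⟨q, hq, rfl⟩ := Finset.mem_image.mp hp
        rw [SimpleGraph.mem_neighborFinset, hAdj] at hq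
        obtain ⟨hne, hone⟩ := hq
        rcases Nat.lt_or_ge q.val (s 0) with h | h
        · exact Finset.mem_union_left _ (Finset.mem_range.mpr h)
        · have hqs : q.val ≠ s 0 := by
            intro hv
            apply hne
            apply Fin.val_injective
            rw [hw0def]
            exact hv.symm ▸ rfl
          have hmax : max w0.val q.val = q.val := by
            simp [hw0def]; omega
          rw [hmax] at hone
          refine Finset.mem_union_right _ (Finset.mem_erase.mpr ⟨hqs, ?_⟩)
          rw [honesdef, Finset.mem_filter]
          exact ⟨Finset.mem_range.mpr q.2, hone⟩
      have hcard : (G.neighborFinset w0).card = ((G.neighborFinset w0).image (fun q => q.val)).card :=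
        (Finset.card_image_of_injective _ Fin.val_injective).symm
      rw [hcard]
      calc _ ≤ ((Finset.range (s 0)) ∪ (ones.erase (s 0))).card := Finset.card_le_card hsub
        _ ≤ (Finset.range (s 0)).card + (ones.erase (s 0)).card := Finset.card_union_le _ _
        _ ≤ s 0 + (tt - 1) := by
            rw [Finset.card_range, Finset.card_erase_of_mem hs0ones]
            have := hones_le
            omega
    have hdeg_u0R : (G.degree u0 : ℝ) ≤ (tt : ℝ) := Nat.cast_le.mpr hdeg_u0
    have hdeg_w0R : (G.degree w0 : ℝ) ≤ (s 0 : ℝ) + ((tt:ℝ) - 1) := by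
      calc (G.degree w0 : ℝ) ≤ ((s 0 + (tt - 1) : ℕ) : ℝ) := Nat.cast_le.mpr hdeg_w0
        _ = (s 0 : ℝ) + ((tt:ℝ) - 1) := by
            rw [Nat.cast_add, Nat.cast_sub htt1, Nat.cast_one]
    -- the symmetric matrix S
    set ds : Fin n → ℝ := fun i => Real.sqrt (G.degree i) with hdsdef
    have hds_pos : ∀ i, 0 < ds i := fun i => Real.sqrt_pos.mpr (hdeg_posR i)
    have hds_sq : ∀ i, ds i * ds i = (G.degree i : ℝ) := fun i =>
      Real.mul_self_sqrt (le_of_lt (hdeg_posR i))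
    set S : Matrix (Fin n) (Fin n) ℝ :=
      Matrix.of (fun i j => (G.adjMatrix ℝ) i j / (ds i * ds j)) with hSdef
    have hSapp : ∀ i j, S i j = (if G.Adj i j then (1:ℝ) else 0) / (ds i * ds j) := by
      intro i j
      rw [hSdef]
      simp [SimpleGraph.adjMatrix_apply]
    have hSherm : S.IsHermitian := by
      rw [Matrix.IsHermitian]
      ext i j
      rw [Matrix.conjTranspose_apply, hSapp, hSapp, star_trivial]
      by_cases h : G.Adj i j
      · rw [if_pos h, if_pos h.symm, mul_comm (ds j) (ds i)]
      · rw [if_neg h, if_neg (fun hc => h hc.symm)]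
        rw [mul_comm (ds j) (ds i)]
    -- test vector
    set x : Fin n → ℝ := Pi.single u0 1 - Pi.single w0 1 with hxdef
    have hxu0 : x u0 = 1 := by
      rw [hxdef]
      simp [Pi.single_apply, huw, Ne.symm huw]
    have hx0 : x ≠ 0 := by
      intro h
      have := congrFun h u0
      rw [hxu0] at this
      simpa using this
    obtain ⟨μ, y, hy0, hSy, hμle⟩ := exists_eig_le_rayleigh (by omega) S hSherm x hx0
    -- transfer eigenpair from S to M
    have hμE : μ ∈ Eset := by
      set v : Fin n → ℝ := fun i => y i / ds i with hvdef
      refine ⟨v, ?_, ?_⟩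
      · obtain ⟨i, hi⟩ := Function.ne_iff.mp hy0
        apply Function.ne_iff.mpr
        refine ⟨i, ?_⟩
        simp only [hvdef, Pi.zero_apply]
        exact div_ne_zero (by simpa using hi) (ne_of_gt (hds_pos i))
      · funext i
        have hSyi : ∑ j, S i j * y j = μ * y i := by
          have := congrFun hSy i
          simpa [Matrix.mulVec, dotProduct] using this
        have hterm : ∀ j, M i j * v j = (ds i)⁻¹ * (S i j * y j) := by
          intro j
          rw [hM, hSapp, hvdef]
          have h1 : (G.degree i : ℝ) = ds i * ds i := (hds_sq i).symm
          rw [h1]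
          have h2 : ds i ≠ 0 := ne_of_gt (hds_pos i)
          have h3 : ds j ≠ 0 := ne_of_gt (hds_pos j)
          field_simp
        show (M.mulVec v) i = μ • v i
        calc (M.mulVec v) i = ∑ j, M i j * v j := by simp [Matrix.mulVec, dotProduct]
          _ = ∑ j, (ds i)⁻¹ * (S i j * y j) := Finset.sum_congr rfl fun j _ => hterm j
          _ = (ds i)⁻¹ * ∑ j, S i j * y j := by rw [Finset.mul_sum]
          _ = (ds i)⁻¹ * (μ * y i) := by rw [hSyi]
          _ = μ • v i := by
              rw [hvdef]
              simp [smul_eq_mul]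
              ring
    have hlam1μ : lam1 ≤ μ := hlam1min μ hμE
    -- compute the Rayleigh quotient
    have hnum : S.mulVec x ⬝ᵥ x = -(2 / (ds u0 * ds w0)) := by
      rw [hxdef]
      rw [Matrix.mulVec_sub]
      rw [Matrix.mulVec_single, Matrix.mulVec_single]
      rw [sub_dotProduct, dotProduct_sub, dotProduct_sub]
      rw [dotProduct_single, dotProduct_single,
        dotProduct_single, dotProduct_single]
      simp only [mul_one, MulOpposite.op_one, one_smul, Matrix.col_apply]
      have huu : S u0 u0 = 0 := by
        rw [hSapp]
        simp [SimpleGraph.irrefl]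
      have hww : S w0 w0 = 0 := by
        rw [hSapp]
        simp [SimpleGraph.irrefl]
      have huw' : S u0 w0 = 1 / (ds u0 * ds w0) := by
        rw [hSapp, if_pos hadj]
      have hwu : S w0 u0 = 1 / (ds w0 * ds u0) := by
        rw [hSapp, if_pos hadj.symm]
      rw [huu, hww, huw', hwu]
      rw [mul_comm (ds w0) (ds u0)]
      ring
    have hden : x ⬝ᵥ x = 2 := by
      rw [hxdef]
      rw [sub_dotProduct, dotProduct_sub, dotProduct_sub]
      rw [dotProduct_single, dotProduct_single,
        dotProduct_single, dotProduct_single]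
      simp only [mul_one]
      rw [Pi.single_apply, Pi.single_apply, Pi.single_apply, Pi.single_apply]
      rw [if_pos rfl, if_pos rfl, if_neg (Ne.symm huw), if_neg huw]
      ring
    have hprod_pos : 0 < ds u0 * ds w0 := mul_pos (hds_pos u0) (hds_pos w0)
    have hC1 : (1:ℝ) ≤ (tt : ℝ) + (s 0 : ℝ) - 1 := by
      have h1 : (1:ℝ) ≤ (tt:ℝ) := by exact_mod_cast htt1
      have h2 : (1:ℝ) ≤ (s 0:ℝ) := by exact_mod_cast hs01
      linarith
    have hprod_le : ds u0 * ds w0 ≤ (tt : ℝ) + (s 0 : ℝ) - 1 := by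
      rw [hdsdef]
      simp only []
      rw [← Real.sqrt_mul (le_of_lt (hdeg_posR u0))]
      have hsq : (G.degree u0 : ℝ) * (G.degree w0 : ℝ) ≤ ((tt:ℝ) + (s 0:ℝ) - 1)^2 := by
        have h1 : (0:ℝ) ≤ (G.degree u0 : ℝ) := le_of_lt (hdeg_posR u0)
        have h2 : (0:ℝ) ≤ (G.degree w0 : ℝ) := le_of_lt (hdeg_posR w0)
        have h3 : (G.degree w0 : ℝ) ≤ (tt:ℝ) + (s 0:ℝ) - 1 := by linarith [hdeg_w0R]
        have h4 : (G.degree u0 : ℝ) ≤ (tt:ℝ) + (s 0:ℝ) - 1 := by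
          have : (1:ℝ) ≤ (s 0:ℝ) := by exact_mod_cast hs01
          linarith [hdeg_u0R]
        nlinarith
      calc Real.sqrt ((G.degree u0 : ℝ) * (G.degree w0 : ℝ))
          ≤ Real.sqrt (((tt:ℝ) + (s 0:ℝ) - 1)^2) := Real.sqrt_le_sqrt hsq
        _ = (tt:ℝ) + (s 0:ℝ) - 1 := Real.sqrt_sq (by linarith)
    have hRval : (S.mulVec x ⬝ᵥ x) / (x ⬝ᵥ x) = -(1 / (ds u0 * ds w0)) := by
      rw [hnum, hden]
      ring
    have hfinal : -(1 / (ds u0 * ds w0)) ≤ -1 / ((tt : ℝ) + (s 0 : ℝ) - 1) := by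
      have h1 : 1 / ((tt : ℝ) + (s 0 : ℝ) - 1) ≤ 1 / (ds u0 * ds w0) :=
        one_div_le_one_div_of_le hprod_pos hprod_le
      have : -1 / ((tt : ℝ) + (s 0 : ℝ) - 1) = -(1 / ((tt : ℝ) + (s 0 : ℝ) - 1)) := by ring
      rw [this]
      linarith
    calc lam1 ≤ μ := hlam1μ
      _ ≤ (S.mulVec x ⬝ᵥ x) / (x ⬝ᵥ x) := hμle
      _ = -(1 / (ds u0 * ds w0)) := hRval
      _ ≤ -1 / ((tt : ℝ) + (s 0 : ℝ) - 1) := hfinal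
end
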